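/- arXiv:1209.3898 — 7 statements merged into one kernel-verified Lean document; each statement's English description precedes it below -/
import Mathlib

section
/- Let A₁,…,A_d and B₁,…,B_d be D×D complex matrices such that ∑_{i=1}^d A_i A_i† = 𝟙 and ∑_{i=1}^d B_i† Λ B_i = Λ for some positive-definite D×D matrix Λ. Then every eigenvalue λ of the linear map X ↦ ∑_{i=1}^d A_i X B_i† on D×D complex matrices satisfies |λ| ≤ 1. -/
set_option maxHeartbeats 1000000

open Matrix ComplexOrder

lemma trace_ctm_eq {m n : Type*} [Fintype m] [Fintype n] (C : Matrix m n ℂ) :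
    Matrix.trace (Cᴴ * C) = ((∑ j, ∑ i, Complex.normSq (C i j) : ℝ) : ℂ) := by
  simp [Matrix.trace, Matrix.mul_apply, Matrix.diag, Complex.normSq_eq_conj_mul_self]

lemma ctm_sum_nonneg {m n : Type*} [Fintype m] [Fintype n] (C : Matrix m n ℂ) :
    0 ≤ (∑ j, ∑ i, Complex.normSq (C i j) : ℝ) :=
  Finset.sum_nonneg fun j _ => Finset.sum_nonneg fun i _ => Complex.normSq_nonneg _

lemma ctm_sum_eq_zero {m n : Type*} [Fintype m] [Fintype n] (C : Matrix m n ℂ)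
    (h : (∑ j, ∑ i, Complex.normSq (C i j) : ℝ) = 0) : C = 0 := by
  ext i j
  have := (Finset.sum_eq_zero_iff_of_nonneg (fun j _ => Finset.sum_nonneg fun i _ => Complex.normSq_nonneg _)).1 h j (by simp)
  have := (Finset.sum_eq_zero_iff_of_nonneg (fun i _ => Complex.normSq_nonneg _)).1 this i (by simp)
  simpa [Complex.normSq_eq_zero] using this

/-- If `∑ i, A i * (A i)ᴴ = 1` and `∑ i, (B i)ᴴ * Λ * B i = Λ` for a
positive-definite matrix `Λ`, then every eigenvalue `lam` of the linear map
`X ↦ ∑ i, A i * X * (B i)ᴴ` satisfies `|lam| ≤ 1`. -/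
theorem eigenvalue_modulus_le_one
    (D d : ℕ) (A B : Fin d → Matrix (Fin D) (Fin D) ℂ)
    (Λ : Matrix (Fin D) (Fin D) ℂ) (hΛ : Λ.PosDef)
    (hA : ∑ i, A i * (A i)ᴴ = 1)
    (hB : ∑ i, (B i)ᴴ * Λ * B i = Λ)
    (lam : ℂ) (X : Matrix (Fin D) (Fin D) ℂ) (hX : X ≠ 0)
    (heig : ∑ i, A i * X * (B i)ᴴ = lam • X) :
    ‖lam‖ ≤ 1 := by
  obtain ⟨R, hRH, hRR⟩ : ∃ R : Matrix (Fin D) (Fin D) ℂ, Rᴴ = R ∧ R * R = Λ :=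
    by
      open scoped MatrixOrder in
      obtain ⟨X, hX, -, h⟩ := CFC.exists_sqrt_of_isSelfAdjoint_of_quasispectrumRestricts
        hΛ.isHermitian (QuasispectrumRestricts.nnreal_of_nonneg hΛ.posSemidef.nonneg)
      exact ⟨X, hX.star_eq, h⟩
  -- X * R ≠ 0
  have hXR : X * R ≠ 0 := by
    intro h
    apply hX
    have hU : IsUnit Λ.det := (isUnit_iff_isUnit_det Λ).1 hΛ.isUnit
    have hXΛ : X * Λ = 0 := by rw [← hRR, ← Matrix.mul_assoc, h, Matrix.zero_mul]
    calc X = X * Λ * Λ⁻¹ := by rw [Matrix.mul_assoc, Matrix.mul_nonsing_inv _ hU, Matrix.mul_one]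
    _ = 0 := by rw [hXΛ, Matrix.zero_mul]
  -- big block matrices
  set M : Matrix (Fin d × Fin D) (Fin D) ℂ := fun p l => star (A p.1 l p.2) with hM
  set S : Matrix (Fin d × Fin D) (Fin D) ℂ := fun p l => (X * (B p.1)ᴴ * R) p.2 l with hS
  have h1 : Mᴴ * M = 1 := by
    ext k l
    have hAe := congrFun (congrFun hA k) l
    simp only [Matrix.mul_apply, Matrix.conjTranspose_apply]
    simp only [Matrix.sum_apply, Matrix.mul_apply, Matrix.conjTranspose_apply] at hAe
    simp only [Matrix.mul_apply, Fintype.sum_prod_type, Matrix.conjTranspose_apply, hM, star_star]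
    rw [← hAe]
  have h2 : Mᴴ * S = lam • (X * R) := by
    ext k l
    simp only [Matrix.mul_apply, Matrix.conjTranspose_apply]
    simp only [Matrix.mul_apply, Fintype.sum_prod_type, Matrix.conjTranspose_apply, hM, hS,
      star_star]
    calc ∑ i, ∑ m, A i k m * (X * (B i)ᴴ * R) m l
        = ∑ i, (A i * (X * (B i)ᴴ * R)) k l := by
          exact Finset.sum_congr rfl fun i _ => by simp [Matrix.mul_apply]
      _ = ((∑ i, A i * X * (B i)ᴴ) * R) k l := by
          simp only [Matrix.sum_mul, Matrix.sum_apply, Matrix.mul_assoc]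
      _ = ((lam • X) * R) k l := by rw [heig]
      _ = (lam • (X * R)) k l := by rw [smul_mul_assoc]
  have h3 : Matrix.trace (Sᴴ * S) = Matrix.trace ((X * R)ᴴ * (X * R)) := by
    have hSS : Sᴴ * S = ∑ i, (X * (B i)ᴴ * R)ᴴ * (X * (B i)ᴴ * R) := by
      ext k l
      simp only [Matrix.mul_apply, Matrix.conjTranspose_apply]
      simp only [Matrix.mul_apply, Fintype.sum_prod_type, Matrix.conjTranspose_apply, hS,
        Matrix.sum_apply]
    have key : ∀ i, Matrix.trace ((X * (B i)ᴴ * R)ᴴ * (X * (B i)ᴴ * R))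
        = Matrix.trace (((B i)ᴴ * Λ * B i) * (Xᴴ * X)) := by
      intro i
      have e : (X * (B i)ᴴ * R)ᴴ * (X * (B i)ᴴ * R) = (R * B i) * (Xᴴ * X) * ((B i)ᴴ * R) := by
        simp only [Matrix.conjTranspose_mul, hRH, Matrix.conjTranspose_conjTranspose,
          Matrix.mul_assoc]
      rw [e, Matrix.trace_mul_cycle]
      congr 1
      rw [← hRR]
      simp only [Matrix.mul_assoc]
    have e2 : (X * R)ᴴ * (X * R) = R * (Xᴴ * X) * R := by
      simp only [Matrix.conjTranspose_mul, hRH, Matrix.mul_assoc]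
    rw [hSS, Matrix.trace_sum, e2]
    calc ∑ i, Matrix.trace ((X * (B i)ᴴ * R)ᴴ * (X * (B i)ᴴ * R))
        = ∑ i, Matrix.trace (((B i)ᴴ * Λ * B i) * (Xᴴ * X)) := Finset.sum_congr rfl fun i _ => key i
      _ = Matrix.trace ((∑ i, (B i)ᴴ * Λ * B i) * (Xᴴ * X)) := by
          rw [Matrix.sum_mul, Matrix.trace_sum]
      _ = Matrix.trace (Λ * (Xᴴ * X)) := by rw [hB]
      _ = Matrix.trace (R * (Xᴴ * X) * R) := by
          rw [Matrix.trace_mul_cycle, ← hRR, Matrix.mul_assoc]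
  -- the contraction matrix Q = 1 - M Mᴴ
  set Q : Matrix (Fin d × Fin D) (Fin d × Fin D) ℂ := 1 - M * Mᴴ with hQdef
  have hP : M * Mᴴ * (M * Mᴴ) = M * Mᴴ := by
    rw [Matrix.mul_assoc, ← Matrix.mul_assoc Mᴴ, h1, Matrix.one_mul]
  have hQH : Qᴴ = Q := by
    simp [hQdef, Matrix.conjTranspose_sub, Matrix.conjTranspose_mul]
  have hQQ : Q * Q = Q := by
    simp only [hQdef, Matrix.sub_mul, Matrix.mul_sub, Matrix.one_mul, Matrix.mul_one, hP]
    abel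
  have htr : Matrix.trace ((Q * S)ᴴ * (Q * S))
      = Matrix.trace (Sᴴ * S) - Matrix.trace ((Mᴴ * S)ᴴ * (Mᴴ * S)) := by
    have e : (Q * S)ᴴ * (Q * S) = Sᴴ * S - Sᴴ * (M * (Mᴴ * S)) := by
      rw [Matrix.conjTranspose_mul, hQH, Matrix.mul_assoc, ← Matrix.mul_assoc Q, hQQ,
        hQdef, Matrix.sub_mul, Matrix.one_mul, Matrix.mul_sub, Matrix.mul_assoc]
    have e' : (Mᴴ * S)ᴴ * (Mᴴ * S) = Sᴴ * (M * (Mᴴ * S)) := by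
      rw [Matrix.conjTranspose_mul, Matrix.conjTranspose_conjTranspose, Matrix.mul_assoc]
    rw [e, e', Matrix.trace_sub]
  -- translate to real numbers
  set t : ℝ := ∑ j, ∑ i, Complex.normSq ((X * R) i j) with ht
  set q : ℝ := ∑ j, ∑ i, Complex.normSq ((Q * S) i j) with hq
  have hMS : Matrix.trace ((Mᴴ * S)ᴴ * (Mᴴ * S)) = (Complex.normSq lam : ℂ) * (t : ℂ) := by
    rw [h2, Matrix.conjTranspose_smul, Matrix.smul_mul, Matrix.mul_smul,
      Matrix.trace_smul, Matrix.trace_smul, trace_ctm_eq, ← ht]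
    simp only [smul_eq_mul, Complex.normSq_eq_conj_mul_self, Complex.star_def]
    ring
  have hreal : t - Complex.normSq lam * t = q := by
    have := htr
    rw [trace_ctm_eq (Q * S), h3, trace_ctm_eq (X * R), hMS, ← ht, ← hq] at this
    have := this.symm
    rw [← Complex.ofReal_mul, ← Complex.ofReal_sub] at this
    exact_mod_cast this
  have hqnn : 0 ≤ q := ctm_sum_nonneg _
  have htpos : 0 < t := by
    rcases lt_or_eq_of_le (ctm_sum_nonneg (X * R)) with h | h
    · exact h
    · exact absurd (ctm_sum_eq_zero _ h.symm) hXR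
  have hns : Complex.normSq lam ≤ 1 := by nlinarith
  have hsq := Complex.sq_norm lam
  nlinarith [norm_nonneg lam]
end

section
/- Let A₁,…,A_d and B₁,…,B_d be D×D complex matrices such that ∑_{i=1}^d A_i A_i† = 𝟙, ∑_{i=1}^d B_i† Λ B_i = Λ for some positive-definite D×D matrix Λ, and such that whenever ∑_{i=1}^d B_i Y B_i† = μ Y for a nonzero D×D matrix Y and μ ∈ ℂ with |μ| = 1, then μ = 1 and Y is a scalar multiple of 𝟙. If there exist a nonzero D×D matrix X and λ ∈ ℂ with |λ| ≥ 1 such that ∑_{i=1}^d A_i X B_i† = λ X, then there exist θ ∈ ℝ and a unitary D×D matrix U such that e^{iθ} A_i = U B_i U† for all i = 1,…,d. -/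
open Matrix ComplexOrder

lemma aux_trace_form {D : ℕ} (P : Matrix (Fin D) (Fin D) ℂ) :
    Matrix.trace (Pᴴ * P) = ((∑ j, ∑ k, Complex.normSq (P k j) : ℝ) : ℂ) := by
  push_cast
  simp only [Matrix.trace, Matrix.diag, Matrix.mul_apply, Matrix.conjTranspose_apply]
  refine Finset.sum_congr rfl fun j _ => Finset.sum_congr rfl fun k _ => ?_
  rw [Complex.star_def, mul_comm, Complex.mul_conj]

lemma aux_trace_nonneg {D : ℕ} (P : Matrix (Fin D) (Fin D) ℂ) :
    0 ≤ Matrix.trace (Pᴴ * P) := by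
  rw [aux_trace_form, Complex.zero_le_real]
  exact Finset.sum_nonneg fun j _ => Finset.sum_nonneg fun k _ => Complex.normSq_nonneg _

lemma aux_trace_eq_zero {D : ℕ} (P : Matrix (Fin D) (Fin D) ℂ)
    (h : Matrix.trace (Pᴴ * P) = 0) : P = 0 := by
  rw [aux_trace_form] at h
  have h' : (∑ j, ∑ k, Complex.normSq (P k j) : ℝ) = 0 := by exact_mod_cast h
  have hz := (Finset.sum_eq_zero_iff_of_nonneg (fun j _ =>
    Finset.sum_nonneg fun k _ => Complex.normSq_nonneg _)).mp h'
  ext k j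
  have hz2 := (Finset.sum_eq_zero_iff_of_nonneg
    (fun k _ => Complex.normSq_nonneg (P k j))).mp (hz j (Finset.mem_univ j)) k (Finset.mem_univ k)
  simpa using Complex.normSq_eq_zero.mp hz2

lemma aux_trace_swap {D : ℕ} (M N : Matrix (Fin D) (Fin D) ℂ) :
    Matrix.trace (Nᴴ * M) = star (Matrix.trace (Mᴴ * N)) := by
  rw [← Matrix.trace_conjTranspose, conjTranspose_mul, conjTranspose_conjTranspose]

set_option maxHeartbeats 2000000 in
/-- under the canonical-form conditions on `A` and `B`, an eigenvalue of
`X ↦ ∑ i, A i * X * (B i)ᴴ` of modulus at least one forces `A` and `B` to be related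
by a phase and a unitary conjugation. -/
theorem eigenvalue_modulus_one_implies_unitarily_related
    (D d : ℕ) (A B : Fin d → Matrix (Fin D) (Fin D) ℂ)
    (Λ : Matrix (Fin D) (Fin D) ℂ) (hΛ : Λ.PosDef)
    (hA : ∑ i, A i * (A i)ᴴ = 1)
    (hB : ∑ i, (B i)ᴴ * Λ * B i = Λ)
    (hBprim : ∀ (μ : ℂ) (Y : Matrix (Fin D) (Fin D) ℂ), Y ≠ 0 → ‖μ‖ = 1 →
      ∑ i, B i * Y * (B i)ᴴ = μ • Y → μ = 1 ∧ ∃ c : ℂ, Y = c • (1 : Matrix (Fin D) (Fin D) ℂ))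
    (X : Matrix (Fin D) (Fin D) ℂ) (hX : X ≠ 0)
    (lam : ℂ) (hlam : 1 ≤ ‖lam‖)
    (heig : ∑ i, A i * X * (B i)ᴴ = lam • X) :
    ∃ (θ : ℝ) (U : Matrix (Fin D) (Fin D) ℂ), Uᴴ * U = 1 ∧
      ∀ i, Complex.exp (θ * Complex.I) • A i = U * B i * Uᴴ := by
  classical
  -- the square root of Λ
  obtain ⟨S, hSS, hSh⟩ : ∃ S : Matrix (Fin D) (Fin D) ℂ, S * S = Λ ∧ Sᴴ = S := by
    open scoped MatrixOrder in
    exact ⟨CFC.sqrt Λ, CFC.sqrt_mul_sqrt_self Λ hΛ.posSemidef.nonneg,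
      (CFC.sqrt_nonneg Λ).posSemidef.1⟩
  have hdetS : IsUnit S.det := by
    have hΛdet : IsUnit Λ.det := (Matrix.isUnit_iff_isUnit_det Λ).mp hΛ.isUnit
    rw [← hSS, Matrix.det_mul] at hΛdet
    exact isUnit_of_mul_isUnit_left hΛdet
  have hScan : ∀ P Q : Matrix (Fin D) (Fin D) ℂ, P * S = Q * S → P = Q := by
    intro P Q h
    have h2 := congrArg (· * S⁻¹) h
    simpa [Matrix.mul_assoc, Matrix.mul_nonsing_inv _ hdetS] using h2
  have hXS : X * S ≠ 0 := by
    intro h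
    exact hX (hScan X 0 (by simpa using h))
  -- the basic positive quantity
  set tR : ℝ := ∑ j, ∑ k, Complex.normSq ((X * S) k j) with htRdef
  have htrace : Matrix.trace ((X * S)ᴴ * (X * S)) = (tR : ℂ) := aux_trace_form _
  have htRnonneg : 0 ≤ tR :=
    Finset.sum_nonneg fun j _ => Finset.sum_nonneg fun k _ => Complex.normSq_nonneg _
  have htRne : tR ≠ 0 := by
    intro h
    exact hXS (aux_trace_eq_zero _ (by rw [htrace, h]; norm_num))
  have htRpos : 0 < tR := lt_of_le_of_ne htRnonneg (Ne.symm htRne)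
  -- reexpression of tR as traces
  have ht : Matrix.trace ((Xᴴ * X) * Λ) = (tR : ℂ) := by
    rw [← htrace]
    calc Matrix.trace ((Xᴴ * X) * Λ)
        = Matrix.trace (((Xᴴ * X) * S) * S) := by rw [← hSS]; congr 1; simp only [Matrix.mul_assoc]
      _ = Matrix.trace (S * ((Xᴴ * X) * S)) := Matrix.trace_mul_comm _ _
      _ = Matrix.trace ((X * S)ᴴ * (X * S)) := by
          congr 1
          rw [conjTranspose_mul, hSh]
          simp only [Matrix.mul_assoc]
  have htX : Matrix.trace (X * (Λ * Xᴴ)) = (tR : ℂ) := by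
    calc Matrix.trace (X * (Λ * Xᴴ))
        = Matrix.trace ((Λ * Xᴴ) * X) := Matrix.trace_mul_comm _ _
      _ = Matrix.trace (Λ * (Xᴴ * X)) := by simp only [Matrix.mul_assoc]
      _ = Matrix.trace ((Xᴴ * X) * Λ) := Matrix.trace_mul_comm _ _
      _ = (tR : ℂ) := ht
  -- the two families of matrices and their differences
  set M : Fin d → Matrix (Fin D) (Fin D) ℂ := fun i => (A i)ᴴ * X * S with hMdef
  set N : Fin d → Matrix (Fin D) (Fin D) ℂ := fun i => X * (B i)ᴴ * S with hNdef
  set P : Fin d → Matrix (Fin D) (Fin D) ℂ := fun i => N i - lam • M i with hPdef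
  -- the four sums
  have h1 : ∑ i, Matrix.trace ((N i)ᴴ * N i) = (tR : ℂ) := by
    have step : ∀ i, Matrix.trace ((N i)ᴴ * N i)
        = Matrix.trace ((Xᴴ * X) * ((B i)ᴴ * Λ * (B i))) := by
      intro i
      calc Matrix.trace ((N i)ᴴ * N i)
          = Matrix.trace ((S * (B i)) * ((Xᴴ * X) * ((B i)ᴴ * S))) := by
            congr 1
            simp only [hNdef, conjTranspose_mul, hSh, conjTranspose_conjTranspose]
            simp only [Matrix.mul_assoc]
        _ = Matrix.trace (((Xᴴ * X) * ((B i)ᴴ * S)) * (S * (B i))) := Matrix.trace_mul_comm _ _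
        _ = Matrix.trace ((Xᴴ * X) * ((B i)ᴴ * Λ * (B i))) := by
            rw [← hSS]; congr 1; simp only [Matrix.mul_assoc]
    simp only [step]
    rw [← Matrix.trace_sum, ← Finset.mul_sum, hB, ht]
  have h2 : ∑ i, Matrix.trace ((M i)ᴴ * M i) = (tR : ℂ) := by
    have step : ∀ i, Matrix.trace ((M i)ᴴ * M i)
        = Matrix.trace ((A i * (A i)ᴴ) * (X * (Λ * Xᴴ))) := by
      intro i
      calc Matrix.trace ((M i)ᴴ * M i)
          = Matrix.trace ((S * Xᴴ) * ((A i * (A i)ᴴ) * (X * S))) := by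
            congr 1
            simp only [hMdef, conjTranspose_mul, hSh, conjTranspose_conjTranspose]
            simp only [Matrix.mul_assoc]
        _ = Matrix.trace (((A i * (A i)ᴴ) * (X * S)) * (S * Xᴴ)) := Matrix.trace_mul_comm _ _
        _ = Matrix.trace ((A i * (A i)ᴴ) * (X * (Λ * Xᴴ))) := by
            rw [← hSS]; congr 1; simp only [Matrix.mul_assoc]
    simp only [step]
    rw [← Matrix.trace_sum, ← Finset.sum_mul, hA, Matrix.one_mul, htX]
  have h3 : ∑ i, Matrix.trace ((M i)ᴴ * N i) = lam * (tR : ℂ) := by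
    have step : ∀ i, Matrix.trace ((M i)ᴴ * N i)
        = Matrix.trace ((A i * X * (B i)ᴴ) * (Λ * Xᴴ)) := by
      intro i
      calc Matrix.trace ((M i)ᴴ * N i)
          = Matrix.trace ((S * Xᴴ) * ((A i * X * (B i)ᴴ) * S)) := by
            congr 1
            simp only [hMdef, hNdef, conjTranspose_mul, hSh, conjTranspose_conjTranspose]
            simp only [Matrix.mul_assoc]
        _ = Matrix.trace (((A i * X * (B i)ᴴ) * S) * (S * Xᴴ)) := Matrix.trace_mul_comm _ _
        _ = Matrix.trace ((A i * X * (B i)ᴴ) * (Λ * Xᴴ)) := by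
            rw [← hSS]; congr 1; simp only [Matrix.mul_assoc]
    simp only [step]
    rw [← Matrix.trace_sum, ← Finset.sum_mul, heig, Matrix.smul_mul, Matrix.trace_smul,
      smul_eq_mul, htX]
  have h4 : ∑ i, Matrix.trace ((N i)ᴴ * M i) = (starRingEnd ℂ) lam * (tR : ℂ) := by
    have step : ∀ i, Matrix.trace ((N i)ᴴ * M i) = star (Matrix.trace ((M i)ᴴ * N i)) :=
      fun i => aux_trace_swap (M i) (N i)
    simp only [step]
    rw [← star_sum, h3]
    simp [Complex.star_def, _root_.map_mul, Complex.conj_ofReal]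
  -- expansion of the difference terms
  have hexp : ∀ i, Matrix.trace ((P i)ᴴ * P i)
      = Matrix.trace ((N i)ᴴ * N i) - lam * Matrix.trace ((N i)ᴴ * M i)
        - (starRingEnd ℂ) lam * Matrix.trace ((M i)ᴴ * N i)
        + ((starRingEnd ℂ) lam * lam) * Matrix.trace ((M i)ᴴ * M i) := by
    intro i
    simp only [hPdef, Matrix.conjTranspose_sub, Matrix.conjTranspose_smul, Matrix.sub_mul,
      Matrix.mul_sub, Matrix.smul_mul, Matrix.mul_smul, Matrix.trace_sub, Matrix.trace_smul,
      smul_smul, smul_eq_mul, Complex.star_def]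
    ring
  have hkey : ∑ i, Matrix.trace ((P i)ᴴ * P i)
      = (((1 - Complex.normSq lam) * tR : ℝ) : ℂ) := by
    simp only [hexp]
    rw [Finset.sum_add_distrib, Finset.sum_sub_distrib, Finset.sum_sub_distrib,
      ← Finset.mul_sum, ← Finset.mul_sum, ← Finset.mul_sum, h1, h2, h3, h4]
    rw [Complex.ofReal_mul, Complex.ofReal_sub, Complex.ofReal_one,
      Complex.normSq_eq_conj_mul_self]
    ring
  -- positivity forces |lam| = 1 and all differences to vanish
  have hge : 0 ≤ ∑ i, Matrix.trace ((P i)ᴴ * P i) :=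
    Finset.sum_nonneg fun i _ => aux_trace_nonneg _
  have hgeR : 0 ≤ (1 - Complex.normSq lam) * tR := by
    rw [hkey, Complex.zero_le_real] at hge
    exact hge
  have hlamsq : 1 ≤ Complex.normSq lam := by
    rw [← Complex.sq_norm]
    nlinarith [norm_nonneg lam]
  have hprod : (1 - Complex.normSq lam) * tR = 0 :=
    le_antisymm (mul_nonpos_of_nonpos_of_nonneg (by linarith) htRnonneg) hgeR
  have hnorm1 : Complex.normSq lam = 1 := by
    rcases mul_eq_zero.mp hprod with h | h
    · linarith
    · exact absurd h htRne
  have hsumzero : ∑ i, Matrix.trace ((P i)ᴴ * P i) = 0 := by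
    rw [hkey, hnorm1]; norm_num
  have hPzero : ∀ i, P i = 0 := fun i =>
    aux_trace_eq_zero _ ((Finset.sum_eq_zero_iff_of_nonneg
      (fun i _ => aux_trace_nonneg (P i))).mp hsumzero i (Finset.mem_univ i))
  -- intertwining relations
  have hXB : ∀ i, X * (B i)ᴴ = lam • ((A i)ᴴ * X) := by
    intro i
    apply hScan
    have h := sub_eq_zero.mp (hPzero i)
    simpa [hNdef, hMdef, Matrix.smul_mul, Matrix.mul_assoc] using h
  have hBX : ∀ i, (B i) * Xᴴ = (starRingEnd ℂ) lam • (Xᴴ * A i) := by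
    intro i
    have h := congrArg conjTranspose (hXB i)
    simpa [conjTranspose_mul, Matrix.conjTranspose_smul, conjTranspose_conjTranspose,
      Complex.star_def, Matrix.mul_assoc] using h
  have hconjmul : (starRingEnd ℂ) lam * lam = 1 := by
    rw [mul_comm, Complex.mul_conj, hnorm1]; norm_num
  -- Xᴴ X is fixed by the B-channel
  have hsumB : ∑ i, B i * (Xᴴ * X) * (B i)ᴴ = (1 : ℂ) • (Xᴴ * X) := by
    have step : ∀ i, B i * (Xᴴ * X) * (B i)ᴴ = Xᴴ * (A i * (A i)ᴴ) * X := by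
      intro i
      calc B i * (Xᴴ * X) * (B i)ᴴ
          = (B i * Xᴴ) * (X * (B i)ᴴ) := by simp only [Matrix.mul_assoc]
        _ = ((starRingEnd ℂ) lam • (Xᴴ * A i)) * (lam • ((A i)ᴴ * X)) := by
            rw [hBX i, hXB i]
        _ = ((starRingEnd ℂ) lam * lam) • ((Xᴴ * A i) * ((A i)ᴴ * X)) := by
            rw [Matrix.smul_mul, Matrix.mul_smul, smul_smul]
        _ = Xᴴ * (A i * (A i)ᴴ) * X := by
            rw [hconjmul, one_smul]; simp only [Matrix.mul_assoc]
    simp only [step]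
    rw [← Finset.sum_mul, ← Finset.mul_sum, hA, Matrix.mul_one, one_smul]
  have hXXne : Xᴴ * X ≠ 0 := fun h => hX (Matrix.conjTranspose_mul_self_eq_zero.mp h)
  obtain ⟨-, c, hc⟩ := hBprim 1 (Xᴴ * X) hXXne (by simp) hsumB
  -- identify the scalar c
  set tR2 : ℝ := ∑ j, ∑ k, Complex.normSq (X k j) with htR2def
  have htr2 : Matrix.trace (Xᴴ * X) = (tR2 : ℂ) := aux_trace_form X
  have htr2nonneg : 0 ≤ tR2 :=
    Finset.sum_nonneg fun j _ => Finset.sum_nonneg fun k _ => Complex.normSq_nonneg _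
  have htr2ne : tR2 ≠ 0 := by
    intro h
    exact hX (aux_trace_eq_zero _ (by rw [htr2, h]; norm_num))
  have htr2pos : 0 < tR2 := lt_of_le_of_ne htr2nonneg (Ne.symm htr2ne)
  have hcD : (tR2 : ℂ) = c * (D : ℂ) := by
    calc (tR2 : ℂ) = Matrix.trace (Xᴴ * X) := htr2.symm
      _ = Matrix.trace (c • (1 : Matrix (Fin D) (Fin D) ℂ)) := by rw [hc]
      _ = c * (D : ℂ) := by simp [Matrix.trace_smul, Matrix.trace_one]
  have hD0 : (D : ℂ) ≠ 0 := by
    intro h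
    rw [h, mul_zero] at hcD
    exact htr2ne (by exact_mod_cast hcD)
  have hDpos : 0 < (D : ℝ) := by
    have : D ≠ 0 := fun h => hD0 (by simp [h])
    exact_mod_cast Nat.pos_of_ne_zero this
  have hcval : c = ((tR2 / D : ℝ) : ℂ) := by
    rw [Complex.ofReal_div, Complex.ofReal_natCast, eq_div_iff hD0]
    exact hcD.symm
  set s : ℝ := Real.sqrt (tR2 / D) with hsdef
  have hdivpos : 0 < tR2 / D := div_pos htr2pos hDpos
  have hspos : 0 < s := Real.sqrt_pos.mpr hdivpos
  have hss : ((s : ℂ)) * (s : ℂ) = c := by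
    rw [hcval, ← Complex.ofReal_mul, Real.mul_self_sqrt hdivpos.le]
  have hsne : (s : ℂ) ≠ 0 := by
    simpa using Complex.ofReal_ne_zero.mpr hspos.ne'
  -- the unitary
  set U : Matrix (Fin D) (Fin D) ℂ := ((s : ℂ))⁻¹ • X with hUdef
  have hUherm : Uᴴ = ((s : ℂ))⁻¹ • Xᴴ := by
    rw [hUdef, Matrix.conjTranspose_smul]
    congr 1
    rw [star_inv₀, Complex.star_def, Complex.conj_ofReal]
  have hU : Uᴴ * U = 1 := by
    rw [hUherm, hUdef, Matrix.smul_mul, Matrix.mul_smul, smul_smul, hc, smul_smul, ← hss,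
      show ((s:ℂ))⁻¹ * ((s:ℂ))⁻¹ * ((s:ℂ) * (s:ℂ)) = 1 by field_simp, one_smul]
  have hUU : U * Uᴴ = 1 := mul_eq_one_comm.mp hU
  have hXXh : X * Xᴴ = ((s : ℂ) * (s : ℂ)) • (1 : Matrix (Fin D) (Fin D) ℂ) := by
    have h := hUU
    rw [hUherm, hUdef, Matrix.smul_mul, Matrix.mul_smul, smul_smul] at h
    have h2 : ((s:ℂ) * (s:ℂ)) • (((s:ℂ))⁻¹ * ((s:ℂ))⁻¹) • (X * Xᴴ)
        = ((s:ℂ) * (s:ℂ)) • (1 : Matrix (Fin D) (Fin D) ℂ) := by rw [h]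
    rwa [smul_smul, show ((s:ℂ) * (s:ℂ)) * (((s:ℂ))⁻¹ * ((s:ℂ))⁻¹) = 1 by field_simp,
      one_smul] at h2
  -- the final intertwining
  have hfin : ∀ i, (starRingEnd ℂ) lam • A i = U * B i * Uᴴ := by
    intro i
    have e1 : X * B i * Xᴴ = ((starRingEnd ℂ) lam * ((s:ℂ) * (s:ℂ))) • A i := by
      calc X * B i * Xᴴ
          = X * (B i * Xᴴ) := by rw [Matrix.mul_assoc]
        _ = X * ((starRingEnd ℂ) lam • (Xᴴ * A i)) := by rw [hBX i]
        _ = (starRingEnd ℂ) lam • ((X * Xᴴ) * A i) := by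
            rw [Matrix.mul_smul, ← Matrix.mul_assoc]
        _ = ((starRingEnd ℂ) lam * ((s:ℂ) * (s:ℂ))) • A i := by
            rw [hXXh, Matrix.smul_mul, Matrix.one_mul, smul_smul]
    rw [hUherm, hUdef, Matrix.smul_mul, Matrix.smul_mul, Matrix.mul_smul, smul_smul, e1,
      smul_smul]
    congr 1
    field_simp
  -- assembling the final statement
  have habs1 : ‖lam‖ = 1 := by
    rw [Complex.norm_def, hnorm1, Real.sqrt_one]
  refine ⟨-lam.arg, U, hU, fun i => ?_⟩
  have h1 : Complex.exp ((lam.arg : ℝ) * Complex.I) = lam := by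
    have h := Complex.norm_mul_exp_arg_mul_I lam
    rwa [habs1, Complex.ofReal_one, one_mul] at h
  have h2 : (starRingEnd ℂ) lam = Complex.exp (((-lam.arg : ℝ) : ℂ) * Complex.I) := by
    conv_lhs => rw [← h1]
    rw [← Complex.exp_conj]
    congr 1
    simp only [_root_.map_mul, Complex.conj_ofReal, Complex.conj_I]
    push_cast
    ring
  rw [← h2]
  exact hfin i
end

section
/- Let A₁,…,A_d and B₁,…,B_d be D×D complex matrices such that ∑_{i=1}^d A_i A_i† = 𝟙, ∑_{i=1}^d B_i† Λ B_i = Λ for some positive-definite D×D matrix Λ, and such that whenever ∑_{i=1}^d B_i Y B_i† = μ Y for a nonzero D×D matrix Y and μ ∈ ℂ with |μ| = 1, then μ = 1 and Y is a scalar multiple of 𝟙. Suppose further that there exist NO θ ∈ ℝ and unitary U with e^{iθ} A_i = U B_i U† for all i. Then the spectral radius ρ of the D²×D² matrix 𝓔_{A,B} := ∑_{i=1}^d A_i ⊗ conj(B_i) satisfies ρ < 1, and consequently |tr(𝓔_{A,B}^N)| ≤ D² ρ^N for every integer N ≥ 1. -/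
open Matrix ComplexOrder Kronecker

lemma traceHZ {m n : Type*} [Fintype m] [Fintype n] (Z : Matrix m n ℂ) :
    Matrix.trace (Zᴴ * Z) = (((∑ j, ∑ i, Complex.normSq (Z i j)) : ℝ) : ℂ) := by
  push_cast
  simp [Matrix.trace, Matrix.diag, Matrix.mul_apply, Matrix.conjTranspose_apply,
    Complex.normSq_eq_conj_mul_self]

lemma traceHZ_zero {m n : Type*} [Fintype m] [Fintype n] (Z : Matrix m n ℂ)
    (h : Matrix.trace (Zᴴ * Z) = 0) : Z = 0 := by
  rw [traceHZ] at h
  norm_cast at h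
  ext i j
  have := (Finset.sum_eq_zero_iff_of_nonneg (fun j _ => Finset.sum_nonneg
      (fun i _ => Complex.normSq_nonneg _))).mp h j (Finset.mem_univ j)
  have := (Finset.sum_eq_zero_iff_of_nonneg (fun i _ => Complex.normSq_nonneg _)).mp this i
      (Finset.mem_univ i)
  simpa [Complex.normSq_eq_zero] using this

set_option maxHeartbeats 1600000 in
lemma key (D d : ℕ) (hD : 0 < D) (A B : Fin d → Matrix (Fin D) (Fin D) ℂ)
    (Λ : Matrix (Fin D) (Fin D) ℂ) (hΛ : Λ.PosDef)
    (hA : ∑ i, A i * (A i)ᴴ = 1)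
    (hB : ∑ i, (B i)ᴴ * Λ * B i = Λ)
    (hBprim : ∀ (μ : ℂ) (Y : Matrix (Fin D) (Fin D) ℂ), Y ≠ 0 → ‖μ‖ = 1 →
      ∑ i, B i * Y * (B i)ᴴ = μ • Y → μ = 1 ∧ ∃ c : ℂ, Y = c • (1 : Matrix (Fin D) (Fin D) ℂ))
    (hdiff : ¬ ∃ (θ : ℝ) (U : Matrix (Fin D) (Fin D) ℂ), Uᴴ * U = 1 ∧
      ∀ i, Complex.exp (θ * Complex.I) • A i = U * B i * Uᴴ)
    (μ : ℂ) (X : Matrix (Fin D) (Fin D) ℂ) (hX : X ≠ 0)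
    (hE : ∑ i, A i * X * (B i)ᴴ = μ • X) : ‖μ‖ < 1 := by
  -- the square root of Λ
  obtain ⟨L, hLL, hLh⟩ : ∃ L : Matrix (Fin D) (Fin D) ℂ, L * L = Λ ∧ Lᴴ = L := by
    open scoped MatrixOrder in
    exact ⟨CFC.sqrt Λ, CFC.sqrt_mul_sqrt_self Λ hΛ.posSemidef.nonneg,
      (CFC.sqrt_nonneg Λ).posSemidef.isHermitian⟩
  have hLdet : IsUnit L.det := by
    rw [isUnit_iff_ne_zero]
    intro h0
    have : Λ.det = L.det * L.det := by rw [← hLL, Matrix.det_mul]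
    rw [h0, mul_zero] at this
    exact hΛ.det_pos.ne' this
  have hLcancel : ∀ {m : Type} [Fintype m] (W : Matrix m (Fin D) ℂ), W * L = 0 → W = 0 := by
    intro m _ W hW
    have := congrArg (fun Z => Z * L⁻¹) hW
    simpa [Matrix.mul_assoc, Matrix.mul_nonsing_inv _ hLdet] using this
  -- block matrices
  set M0 : Matrix (Fin D) (Fin d × Fin D) ℂ := Matrix.of (fun i nk => A nk.1 i nk.2) with hM0
  set N0 : Matrix (Fin d × Fin D) (Fin D) ℂ :=
    Matrix.of (fun nk l => (X * (B nk.1)ᴴ) nk.2 l) with hN0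
  have hMN : M0 * N0 = ∑ i, A i * X * (B i)ᴴ := by
    ext k l
    simp only [hM0, hN0, Matrix.mul_apply, Matrix.of_apply, Fintype.sum_prod_type,
      Matrix.sum_apply, Matrix.mul_assoc]
  have hMM : M0 * M0ᴴ = 1 := by
    rw [← hA]
    ext i j
    simp only [hM0, Matrix.mul_apply, Matrix.conjTranspose_apply, Matrix.of_apply,
      Fintype.sum_prod_type, Matrix.sum_apply]
  have hNN : N0ᴴ * N0 = ∑ n, (X * (B n)ᴴ)ᴴ * (X * (B n)ᴴ) := by
    ext k l
    simp only [hN0, Matrix.mul_apply, Matrix.conjTranspose_apply, Matrix.of_apply,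
      Fintype.sum_prod_type, Matrix.sum_apply]
  -- the projection P
  set P : Matrix (Fin d × Fin D) (Fin d × Fin D) ℂ := M0ᴴ * M0 with hPdef
  have hPP : P * P = P := by
    rw [hPdef, Matrix.mul_assoc, ← Matrix.mul_assoc M0, hMM, Matrix.one_mul]
  have hPh : Pᴴ = P := by rw [hPdef, Matrix.conjTranspose_mul, Matrix.conjTranspose_conjTranspose]
  have hQ : (1 - P) * (1 - P) = 1 - P := by
    rw [Matrix.sub_mul, Matrix.mul_sub, Matrix.mul_sub, hPP]
    simp
  have hQh : (1 - P)ᴴ = 1 - P := by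
    rw [Matrix.conjTranspose_sub, hPh, Matrix.conjTranspose_one]
  set G : Matrix (Fin d × Fin D) (Fin D) ℂ := N0 * L with hGdef
  set K : Matrix (Fin d × Fin D) (Fin D) ℂ := (1 - P) * G with hKdef
  have hKK : Kᴴ * K = Gᴴ * G - Gᴴ * (P * G) := by
    rw [hKdef, Matrix.conjTranspose_mul, hQh]
    calc (Gᴴ * (1 - P)) * ((1 - P) * G) = Gᴴ * (((1 - P) * (1 - P)) * G) := by
          simp only [Matrix.mul_assoc]
      _ = Gᴴ * ((1 - P) * G) := by rw [hQ]
      _ = Gᴴ * G - Gᴴ * (P * G) := by rw [Matrix.sub_mul, Matrix.mul_sub, Matrix.one_mul]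
  -- trace of Gᴴ P G
  have hMG : M0 * G = μ • (X * L) := by
    rw [hGdef, ← Matrix.mul_assoc, hMN, hE, Matrix.smul_mul]
  have htrace_PG : Matrix.trace (Gᴴ * (P * G)) = ((Complex.normSq μ : ℝ) : ℂ) *
      Matrix.trace ((X * L)ᴴ * (X * L)) := by
    have : Gᴴ * (P * G) = (M0 * G)ᴴ * (M0 * G) := by
      rw [hPdef]
      simp only [Matrix.conjTranspose_mul, Matrix.mul_assoc]
    rw [this, hMG, Matrix.conjTranspose_smul, Matrix.smul_mul, Matrix.mul_smul, smul_smul,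
      Matrix.trace_smul, smul_eq_mul]
    congr 1
    rw [Complex.normSq_eq_conj_mul_self]
    rfl
  -- trace of Gᴴ G
  have htrace_GG : Matrix.trace (Gᴴ * G) = Matrix.trace ((X * L)ᴴ * (X * L)) := by
    have h1 : Matrix.trace (Gᴴ * G) = Matrix.trace ((N0ᴴ * N0) * Λ) := by
      rw [hGdef, Matrix.conjTranspose_mul, hLh]
      rw [Matrix.mul_assoc, ← Matrix.mul_assoc N0ᴴ N0 L]
      rw [Matrix.trace_mul_comm L]
      rw [Matrix.mul_assoc, hLL]
    have h2 : Matrix.trace ((N0ᴴ * N0) * Λ) = Matrix.trace (X * Λ * Xᴴ) := by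
      rw [hNN, Matrix.sum_mul, Matrix.trace_sum]
      have heach : ∀ n, Matrix.trace ((X * (B n)ᴴ)ᴴ * (X * (B n)ᴴ) * Λ)
          = Matrix.trace (X * ((B n)ᴴ * Λ * B n) * Xᴴ) := by
        intro n
        have e1 : (X * (B n)ᴴ)ᴴ * (X * (B n)ᴴ) * Λ
            = (B n * Xᴴ) * (X * ((B n)ᴴ * Λ)) := by
          simp only [Matrix.conjTranspose_mul, Matrix.conjTranspose_conjTranspose,
            Matrix.mul_assoc]
        rw [e1, Matrix.trace_mul_comm]
        congr 1
        simp only [Matrix.mul_assoc]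
      rw [Finset.sum_congr rfl fun n _ => heach n]
      have : ∑ n, Matrix.trace (X * ((B n)ᴴ * Λ * B n) * Xᴴ)
          = Matrix.trace (X * (∑ n, (B n)ᴴ * Λ * B n) * Xᴴ) := by
        rw [Finset.mul_sum, Finset.sum_mul, Matrix.trace_sum]
      rw [this, hB]
    have h3 : Matrix.trace ((X * L)ᴴ * (X * L)) = Matrix.trace (X * Λ * Xᴴ) := by
      calc Matrix.trace ((X * L)ᴴ * (X * L)) = Matrix.trace ((L * Xᴴ) * (X * L)) := by
            rw [Matrix.conjTranspose_mul, hLh]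
        _ = Matrix.trace ((X * L) * (L * Xᴴ)) := Matrix.trace_mul_comm _ _
        _ = Matrix.trace (X * Λ * Xᴴ) := by rw [← hLL]; simp only [Matrix.mul_assoc]
    rw [h1, h2, ← h3]
  -- real quantities
  set sX : ℝ := ∑ j, ∑ i, Complex.normSq ((X * L) i j) with hsXdef
  set sK : ℝ := ∑ j, ∑ i, Complex.normSq (K i j) with hsKdef
  have htX : Matrix.trace ((X * L)ᴴ * (X * L)) = (sX : ℂ) := traceHZ _
  have htK : Matrix.trace (Kᴴ * K) = (sK : ℂ) := traceHZ _
  have hid : (sK : ℂ) = (sX : ℂ) - ((Complex.normSq μ : ℝ) : ℂ) * (sX : ℂ) := by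
    rw [← htK, hKK, Matrix.trace_sub, htrace_GG, htrace_PG, htX]
  have hidR : sK = sX - Complex.normSq μ * sX := by exact_mod_cast hid
  have hsXnonneg : 0 ≤ sX :=
    Finset.sum_nonneg fun j _ => Finset.sum_nonneg fun i _ => Complex.normSq_nonneg _
  have hsKnonneg : 0 ≤ sK :=
    Finset.sum_nonneg fun j _ => Finset.sum_nonneg fun i _ => Complex.normSq_nonneg _
  have hsXpos : 0 < sX := by
    rcases lt_or_eq_of_le hsXnonneg with h | h
    · exact h
    · exfalso
      have hXL0 : X * L = 0 := traceHZ_zero _ (by rw [htX, ← h]; norm_num)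
      exact hX (hLcancel X hXL0)
  have hle : ‖μ‖ ≤ 1 := by
    have hfac : (1 - Complex.normSq μ) * sX = sK := by rw [hidR]; ring
    have hn1 : Complex.normSq μ ≤ 1 := by
      have h20 : (0:ℝ) ≤ (1 - Complex.normSq μ) * sX := hfac ▸ hsKnonneg
      have h21 : (0:ℝ) ≤ 1 - Complex.normSq μ := by
        by_contra hneg
        push_neg at hneg
        nlinarith
      linarith
    calc ‖μ‖ = Real.sqrt (Complex.normSq μ) := Complex.norm_def μ
      _ ≤ Real.sqrt 1 := Real.sqrt_le_sqrt hn1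
      _ = 1 := Real.sqrt_one
  refine lt_of_le_of_ne hle ?_
  intro habs1
  have hnsq1 : Complex.normSq μ = 1 := by
    rw [← Complex.sq_norm, habs1]; norm_num
  have hsK0 : sK = 0 := by rw [hidR, hnsq1]; ring
  have hK0 : K = 0 := traceHZ_zero _ (by rw [htK, hsK0]; norm_num)
  have h5 : (1 - P) * N0 = 0 := by
    apply hLcancel
    rw [Matrix.mul_assoc, ← hGdef, ← hKdef, hK0]
  have hN0P : N0 = μ • (M0ᴴ * X) := by
    have h6 : N0 = P * N0 := by
      have h7 : N0 - P * N0 = 0 := by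
        calc N0 - P * N0 = (1 - P) * N0 := by rw [Matrix.sub_mul, Matrix.one_mul]
          _ = 0 := h5
      exact sub_eq_zero.mp h7
    rw [h6, hPdef, Matrix.mul_assoc, hMN, hE, Matrix.mul_smul]
  have hXB : ∀ n, X * (B n)ᴴ = μ • ((A n)ᴴ * X) := by
    intro n
    ext k l
    have h8 := congrFun (congrFun hN0P (n, k)) l
    simpa [hN0, hM0, Matrix.mul_apply, Matrix.conjTranspose_apply, Matrix.smul_apply,
      Matrix.of_apply, Finset.mul_sum] using h8
  have hmu1 : star μ * μ = 1 := by
    have h30 := Complex.normSq_eq_conj_mul_self (z := μ)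
    rw [hnsq1] at h30
    exact_mod_cast h30.symm
  have hterm : ∀ n, B n * (Xᴴ * X) * (B n)ᴴ = Xᴴ * (A n * (A n)ᴴ) * X := by
    intro n
    have e : B n * (Xᴴ * X) * (B n)ᴴ = (X * (B n)ᴴ)ᴴ * (X * (B n)ᴴ) := by
      simp only [Matrix.conjTranspose_mul, Matrix.conjTranspose_conjTranspose, Matrix.mul_assoc]
    rw [e, hXB n, Matrix.conjTranspose_smul, Matrix.smul_mul, Matrix.mul_smul, smul_smul,
      hmu1, one_smul]
    simp only [Matrix.conjTranspose_mul, Matrix.conjTranspose_conjTranspose, Matrix.mul_assoc]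
  have hsum : ∑ n, B n * (Xᴴ * X) * (B n)ᴴ = (1 : ℂ) • (Xᴴ * X) := by
    rw [Finset.sum_congr rfl fun n _ => hterm n]
    have h9 : ∑ n, Xᴴ * (A n * (A n)ᴴ) * X = Xᴴ * (∑ n, A n * (A n)ᴴ) * X := by
      rw [Finset.mul_sum, Finset.sum_mul]
    rw [h9, hA, Matrix.mul_one, one_smul]
  have hXX : Xᴴ * X ≠ 0 := fun h => hX (Matrix.conjTranspose_mul_self_eq_zero.mp h)
  obtain ⟨-, c, hc⟩ := hBprim 1 (Xᴴ * X) hXX (by simp) hsum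
  set sXX : ℝ := ∑ j, ∑ i, Complex.normSq (X i j) with hsXXdef
  have htXX : Matrix.trace (Xᴴ * X) = (sXX : ℂ) := traceHZ X
  have hsXXnonneg : 0 ≤ sXX :=
    Finset.sum_nonneg fun j _ => Finset.sum_nonneg fun i _ => Complex.normSq_nonneg _
  have hsXXpos : 0 < sXX := by
    rcases lt_or_eq_of_le hsXXnonneg with h | h
    · exact h
    · exact absurd (traceHZ_zero X (by rw [htXX, ← h]; norm_num)) hX
  have hDne : (D : ℂ) ≠ 0 := Nat.cast_ne_zero.mpr hD.ne'
  have hcD : c * D = (sXX : ℂ) := by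
    have h10 := congrArg Matrix.trace hc
    rw [htXX, Matrix.trace_smul, Matrix.trace_one, smul_eq_mul] at h10
    simpa using h10.symm
  set cr : ℝ := sXX / D with hcrdef
  have hcrpos : 0 < cr := div_pos hsXXpos (by exact_mod_cast hD)
  have hceq : c = (cr : ℂ) := by
    rw [hcrdef]
    push_cast
    rw [eq_div_iff hDne]
    exact hcD
  set r0 : ℝ := Real.sqrt cr with hr0def
  have hr0pos : 0 < r0 := Real.sqrt_pos.mpr hcrpos
  have hr0sq : r0 * r0 = cr := Real.mul_self_sqrt hcrpos.le
  have hr0ne : ((r0 : ℝ) : ℂ) ≠ 0 := by exact_mod_cast hr0pos.ne'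
  set U : Matrix (Fin D) (Fin D) ℂ := ((r0 : ℝ) : ℂ)⁻¹ • X with hUdef
  have hUU : Uᴴ * U = 1 := by
    have h11 : Uᴴ * U = ((((r0 : ℝ) : ℂ))⁻¹ * (((r0 : ℝ) : ℂ))⁻¹) • (Xᴴ * X) := by
      rw [hUdef, Matrix.conjTranspose_smul, Matrix.smul_mul, Matrix.mul_smul, smul_smul]
      congr 2
      rw [star_inv₀]
      congr 1
      exact Complex.conj_ofReal r0
    rw [h11, hc, hceq, smul_smul]
    have h12 : (((r0 : ℝ) : ℂ))⁻¹ * (((r0 : ℝ) : ℂ))⁻¹ * ((cr : ℝ) : ℂ) = 1 := by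
      rw [← hr0sq]
      push_cast
      field_simp
    rw [h12, one_smul]
  have hUUc : U * Uᴴ = 1 := mul_eq_one_comm.mp hUU
  have hXU : X = ((r0 : ℝ) : ℂ) • U := by
    rw [hUdef, smul_smul, mul_inv_cancel₀ hr0ne, one_smul]
  have hUB : ∀ n, U * B n * Uᴴ = (starRingEnd ℂ) μ • A n := by
    intro n
    have h6 : U * (B n)ᴴ = μ • ((A n)ᴴ * U) := by
      have h13 := hXB n
      rw [hXU] at h13
      rw [Matrix.smul_mul, Matrix.mul_smul, smul_comm] at h13
      exact smul_right_injective _ hr0ne h13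
    have h7 : B n * Uᴴ = (starRingEnd ℂ) μ • (Uᴴ * A n) := by
      have h14 := congrArg Matrix.conjTranspose h6
      simpa [Matrix.conjTranspose_mul, Matrix.conjTranspose_smul,
        Matrix.conjTranspose_conjTranspose] using h14
    calc U * B n * Uᴴ = U * (B n * Uᴴ) := by rw [Matrix.mul_assoc]
      _ = (starRingEnd ℂ) μ • (U * (Uᴴ * A n)) := by rw [h7, Matrix.mul_smul]
      _ = (starRingEnd ℂ) μ • A n := by rw [← Matrix.mul_assoc, hUUc, Matrix.one_mul]
  apply hdiff
  refine ⟨Complex.arg ((starRingEnd ℂ) μ), U, hUU, fun n => ?_⟩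
  have h15 : Complex.exp ((Complex.arg ((starRingEnd ℂ) μ) : ℝ) * Complex.I)
      = (starRingEnd ℂ) μ := by
    have h16 := Complex.norm_mul_exp_arg_mul_I ((starRingEnd ℂ) μ)
    rw [Complex.norm_conj, habs1] at h16
    simpa using h16
  rw [h15, hUB n]

lemma abs_multiset_sum (s : Multiset ℂ) :
    ‖s.sum‖ ≤ ((s.map (fun z : ℂ => ‖z‖)).sum) := by
  induction s using Multiset.induction_on with
  | empty => simp
  | cons a s ih =>
    simp only [Multiset.sum_cons, Multiset.map_cons]
    exact le_trans (norm_add_le _ _) (by gcongr)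

lemma exists_eigvec {n : Type*} [Fintype n] [DecidableEq n] {M : Matrix n n ℂ} {μ : ℂ}
    (h : μ ∈ spectrum ℂ M) : ∃ v, v ≠ 0 ∧ M *ᵥ v = μ • v := by
  have h1 : ¬ IsUnit (μ • (1 : Matrix n n ℂ) - M) := by
    rw [← Algebra.algebraMap_eq_smul_one]
    exact spectrum.mem_iff.mp h
  rw [Matrix.isUnit_iff_isUnit_det, isUnit_iff_ne_zero, not_not] at h1
  obtain ⟨v, hv, hveq⟩ := (Matrix.exists_mulVec_eq_zero_iff).mpr h1
  refine ⟨v, hv, ?_⟩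
  rw [Matrix.sub_mulVec, sub_eq_zero, Matrix.smul_mulVec, Matrix.one_mulVec] at hveq
  exact hveq.symm

lemma root_mem_spec {n : Type*} [Fintype n] [DecidableEq n] (M : Matrix n n ℂ) {r : ℂ}
    (h : r ∈ M.charpoly.roots) : r ∈ spectrum ℂ M := by
  have hroot : M.charpoly.IsRoot r := (Polynomial.mem_roots (M.charpoly_monic.ne_zero)).mp h
  have hdet : ((Matrix.charmatrix M).map (Polynomial.evalRingHom r)).det = 0 := by
    have := RingHom.map_det (Polynomial.evalRingHom r) (Matrix.charmatrix M)
    rw [RingHom.mapMatrix_apply] at this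
    rw [← this]
    exact hroot
  have hmap : (Matrix.charmatrix M).map (Polynomial.evalRingHom r) = r • 1 - M := by
    ext i j
    by_cases hij : i = j <;>
      simp [Matrix.charmatrix_apply, Matrix.map_apply, Matrix.diagonal_apply, hij,
        Matrix.one_apply, Matrix.smul_apply, Matrix.sub_apply]
  rw [hmap] at hdet
  rw [spectrum.mem_iff, Algebra.algebraMap_eq_smul_one, Matrix.isUnit_iff_isUnit_det,
    isUnit_iff_ne_zero, not_not]
  exact hdet

lemma mulVec_to_matrix (D d : ℕ) (A B : Fin d → Matrix (Fin D) (Fin D) ℂ)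
    (μ : ℂ) (v : Fin D × Fin D → ℂ)
    (hvec : (∑ i, (A i) ⊗ₖ ((B i).map (starRingEnd ℂ))) *ᵥ v = μ • v) :
    (∑ i, A i * (Matrix.of fun a b => v (a, b)) * (B i)ᴴ) = μ • (Matrix.of fun a b => v (a, b)) := by
  ext k l
  have h := congrFun hvec (k, l)
  simp only [Matrix.mulVec, dotProduct, Matrix.sum_apply, Matrix.kroneckerMap_apply,
    Fintype.sum_prod_type, Matrix.map_apply, Finset.sum_mul, Pi.smul_apply, smul_eq_mul] at h
  simp only [Matrix.sum_apply, Matrix.mul_apply, Matrix.conjTranspose_apply, Matrix.of_apply,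
    Finset.sum_mul, Pi.smul_apply, Matrix.smul_apply, smul_eq_mul]
  rw [← h]
  calc ∑ i, ∑ b, ∑ a, A i k a * v (a, b) * star (B i l b)
      = ∑ b, ∑ a, ∑ i, A i k a * v (a, b) * star (B i l b) := by
        rw [Finset.sum_comm]
        exact Finset.sum_congr rfl fun b _ => Finset.sum_comm
    _ = ∑ a, ∑ b, ∑ i, A i k a * v (a, b) * star (B i l b) := Finset.sum_comm
    _ = ∑ a, ∑ b, ∑ i, A i k a * (starRingEnd ℂ) (B i l b) * v (a, b) := by
        refine Finset.sum_congr rfl fun a _ => Finset.sum_congr rfl fun b _ =>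
          Finset.sum_congr rfl fun i _ => ?_
        simp only [RCLike.star_def]
        ring


/-- for two canonical (injective) MPS tensors `A`, `B` that are NOT related by
a phase times a unitary conjugation, the spectral radius `ρ` of the transfer operator
`𝓔_{A,B} = ∑ i, A i ⊗ conj (B i)` satisfies `ρ < 1`, hence `|tr 𝓔_{A,B}^N| ≤ D² ρ^N`. -/
theorem transfer_operator_spectral_radius_lt_one
    (D d : ℕ) (A B : Fin d → Matrix (Fin D) (Fin D) ℂ)
    (Λ : Matrix (Fin D) (Fin D) ℂ) (hΛ : Λ.PosDef)
    (hA : ∑ i, A i * (A i)ᴴ = 1)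
    (hB : ∑ i, (B i)ᴴ * Λ * B i = Λ)
    (hBprim : ∀ (μ : ℂ) (Y : Matrix (Fin D) (Fin D) ℂ), Y ≠ 0 → ‖μ‖ = 1 →
      ∑ i, B i * Y * (B i)ᴴ = μ • Y → μ = 1 ∧ ∃ c : ℂ, Y = c • (1 : Matrix (Fin D) (Fin D) ℂ))
    (hdiff : ¬ ∃ (θ : ℝ) (U : Matrix (Fin D) (Fin D) ℂ), Uᴴ * U = 1 ∧
      ∀ i, Complex.exp (θ * Complex.I) • A i = U * B i * Uᴴ) :
    (sSup ((fun z : ℂ => ‖z‖) '' spectrum ℂ (∑ i, (A i) ⊗ₖ ((B i).map (starRingEnd ℂ)))) < 1) ∧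
    ∀ N : ℕ, 1 ≤ N →
      ‖(Matrix.trace ((∑ i, (A i) ⊗ₖ ((B i).map (starRingEnd ℂ))) ^ N))‖ ≤
        (D : ℝ) ^ 2 *
          (sSup ((fun z : ℂ => ‖z‖) '' spectrum ℂ (∑ i, (A i) ⊗ₖ ((B i).map (starRingEnd ℂ))))) ^ N := by
  rcases Nat.eq_zero_or_pos D with hD0 | hD
  · exfalso
    apply hdiff
    refine ⟨0, 1, ?_, fun i => ?_⟩
    · subst hD0; ext i j; exact i.elim0
    · subst hD0; ext i j; exact i.elim0
  set M : Matrix (Fin D × Fin D) (Fin D × Fin D) ℂ :=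
    ∑ i, (A i) ⊗ₖ ((B i).map (starRingEnd ℂ)) with hMdef
  have hspec_lt : ∀ μ ∈ spectrum ℂ M, ‖μ‖ < 1 := by
    intro μ hμ
    obtain ⟨v, hv, hvec⟩ := exists_eigvec hμ
    have hXne : (Matrix.of fun a b => v (a, b)) ≠ 0 := by
      intro h
      apply hv
      funext p
      have := congrFun (congrFun h p.1) p.2
      simpa using this
    exact key D d hD A B Λ hΛ hA hB hBprim hdiff μ _ hXne (mulVec_to_matrix D d A B μ v hvec)
  haveI : Nonempty (Fin D) := Fin.pos_iff_nonempty.mp hD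
  haveI : Nontrivial (Matrix (Fin D × Fin D) (Fin D × Fin D) ℂ) := by
    refine ⟨0, 1, fun h => ?_⟩
    have := congrFun (congrFun h (Classical.arbitrary _)) (Classical.arbitrary _)
    simp [Matrix.one_apply] at this
  have hne : (spectrum ℂ M).Nonempty :=
    spectrum.nonempty_of_isAlgClosed_of_finiteDimensional ℂ M
  set S : Set ℝ := (fun z : ℂ => ‖z‖) '' spectrum ℂ M with hSdef
  have hSfin : S.Finite := (Matrix.finite_spectrum M).image _
  have hSne : S.Nonempty := hne.image _
  have hbdd : BddAbove S := hSfin.bddAbove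
  have hmem : sSup S ∈ S := hSne.csSup_mem hSfin
  have hρlt : sSup S < 1 := by
    obtain ⟨μ, hμ, hμeq⟩ := hmem
    rw [← hμeq]
    exact hspec_lt μ hμ
  have hρnonneg : 0 ≤ sSup S := by
    obtain ⟨μ, hμ, hμeq⟩ := hmem
    rw [← hμeq]
    exact norm_nonneg μ
  refine ⟨hρlt, fun N hN => ?_⟩
  have htr : Matrix.trace (M ^ N) = ((M ^ N).charpoly.roots).sum :=
    Matrix.trace_eq_sum_roots_charpoly (M ^ N)
  have hspecN : spectrum ℂ (M ^ N) = (· ^ N) '' spectrum ℂ M :=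
    spectrum.map_pow_of_pos M (Nat.lt_of_lt_of_le Nat.zero_lt_one hN)
  have hbound : ∀ x ∈ ((M ^ N).charpoly.roots).map (fun z : ℂ => ‖z‖), x ≤ (sSup S) ^ N := by
    intro x hx
    obtain ⟨r, hr, rfl⟩ := Multiset.mem_map.mp hx
    have hrs : r ∈ spectrum ℂ (M ^ N) := root_mem_spec _ hr
    rw [hspecN] at hrs
    obtain ⟨μ, hμ, rfl⟩ := hrs
    rw [norm_pow]
    have : ‖μ‖ ≤ sSup S := le_csSup hbdd ⟨μ, hμ, rfl⟩
    exact pow_le_pow_left₀ (norm_nonneg μ) this N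
  have hcard : Multiset.card ((M ^ N).charpoly.roots) ≤ D ^ 2 := by
    have h1 := (M ^ N).charpoly.card_roots'
    rw [Matrix.charpoly_natDegree_eq_dim] at h1
    simpa [Fintype.card_prod, pow_two] using h1
  calc ‖(Matrix.trace (M ^ N))‖
      = ‖(((M ^ N).charpoly.roots).sum)‖ := by rw [htr]
    _ ≤ (((M ^ N).charpoly.roots).map (fun z : ℂ => ‖z‖)).sum := abs_multiset_sum _
    _ ≤ Multiset.card (((M ^ N).charpoly.roots).map (fun z : ℂ => ‖z‖)) • ((sSup S) ^ N) :=
        Multiset.sum_le_card_nsmul _ _ hbound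
    _ ≤ (D : ℝ) ^ 2 * (sSup S) ^ N := by
        rw [Multiset.card_map, nsmul_eq_mul]
        have : ((Multiset.card ((M ^ N).charpoly.roots)) : ℝ) ≤ (D : ℝ) ^ 2 := by
          exact_mod_cast hcard
        exact mul_le_mul_of_nonneg_right this (pow_nonneg hρnonneg N) |>.trans_eq (by ring) |>.trans
          (le_of_eq rfl)
end

section
/- Let d, D, L be positive integers. Let A₁,…,A_d be D×D complex matrices with ∑_i A_i A_i† = 𝟙, and let Λ be a D×D positive semidefinite matrix with tr Λ = 1 and ∑_i A_i† Λ A_i = Λ. Let P be an orthogonal projection with PΛ = ΛP; set Λ̃ = PΛP, Ã_i = P A_i P and δ = tr(Λ − Λ̃). Define the maps E(X) = ∑_i A_i† X A_i and Ẽ(X) = ∑_i Ã_i† X Ã_i on D×D matrices. Then ‖Ẽ^L(Λ) − Λ‖₁ ≤ 2Lδ; in particular tr(Ẽ^L(Λ)) ≥ 1 − 2Lδ. -/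
open Matrix ComplexOrder

/-- The trace norm (sum of singular values) of a complex square matrix, defined as the
trace of the positive semidefinite square root of `Mᴴ * M`. -/
noncomputable def traceNorm {n : Type*} [Fintype n] [DecidableEq n]
    (M : Matrix n n ℂ) : ℝ :=
  (((Matrix.posSemidef_conjTranspose_mul_self M).1.eigenvectorUnitary : Matrix n n ℂ) *
    diagonal (fun i => ((Real.sqrt ((Matrix.posSemidef_conjTranspose_mul_self M).1.eigenvalues i) : ℝ) : ℂ)) *
    (star (Matrix.posSemidef_conjTranspose_mul_self M).1.eigenvectorUnitary : Matrix n n ℂ)).trace.re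

section Aux
variable {n : Type*} [Fintype n] [DecidableEq n]
open scoped MatrixOrder

lemma psd_sum' {ι : Type*} (s : Finset ι) (f : ι → Matrix n n ℂ)
    (h : ∀ i ∈ s, (f i).PosSemidef) : (∑ i ∈ s, f i).PosSemidef :=
  Finset.sum_induction f _ (fun _ _ => Matrix.PosSemidef.add) Matrix.PosSemidef.zero h

lemma psd_trace_re_nonneg' {M : Matrix n n ℂ} (hM : M.PosSemidef) : 0 ≤ M.trace.re := by
  have : (0:ℂ) ≤ M.trace := by
    rw [Matrix.trace]
    refine Finset.sum_nonneg fun i _ => ?_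
    exact hM.diag_nonneg
  exact (Complex.le_def.mp this).1

lemma traceNorm_neg_psd' {S : Matrix n n ℂ} (hS : S.PosSemidef) :
    traceNorm (-S) = S.trace.re := by
  have hH := (Matrix.posSemidef_conjTranspose_mul_self (-S)).1
  have h1 : traceNorm (-S) = (hH.cfc Real.sqrt).trace.re := by
    simp only [traceNorm, IsHermitian.cfc, Unitary.conjStarAlgAut_apply, Function.comp_def]
    rfl
  rw [h1, ← hH.cfc_eq, ← cfcₙ_eq_cfc (f := Real.sqrt) (a := (-S)ᴴ * -S), ← CFC.sqrt_eq_real_sqrt _ (Matrix.posSemidef_conjTranspose_mul_self (-S)).nonneg,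
    conjTranspose_neg, neg_mul_neg, hS.isHermitian.eq, CFC.sqrt_mul_self S hS.nonneg]

lemma trace_mul_le_of_le_one' {Y F : Matrix n n ℂ} (hY : Y.PosSemidef)
    (hF : (1 - F).PosSemidef) : (Y * F).trace.re ≤ Y.trace.re := by
  have key : (0:ℝ) ≤ (Y * (1 - F)).trace.re := by
    have h2 : (Y * (1 - F)).trace = (CFC.sqrt Y * (1 - F) * CFC.sqrt Y).trace := by
      rw [show Y * (1 - F) = CFC.sqrt Y * (CFC.sqrt Y * (1 - F)) by rw [← mul_assoc, CFC.sqrt_mul_sqrt_self Y hY.nonneg],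
        Matrix.trace_mul_comm, mul_assoc]
    have h3 : (CFC.sqrt Y * (1 - F) * CFC.sqrt Y).PosSemidef := by
      have := hF.conjTranspose_mul_mul_same (CFC.sqrt Y)
      rwa [(CFC.sqrt_nonneg Y).posSemidef.isHermitian.eq] at this
    rw [h2]; exact psd_trace_re_nonneg' h3
  have heq : (Y * (1 - F)).trace = Y.trace - (Y * F).trace := by
    rw [mul_sub, mul_one, Matrix.trace_sub]
  rw [heq] at key
  simp only [Complex.sub_re] at key
  linarith

end Aux

/-- for the projected channel `Ẽ(X) = ∑ i, Ã_iᴴ X Ã_i` with `Ã_i = P A_i P`,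
one has `‖Ẽ^L(Λ) − Λ‖₁ ≤ 2 L δ`; in particular `tr(Ẽ^L(Λ)) ≥ 1 − 2 L δ`,
where `δ = tr(Λ − PΛP)`. -/
theorem projected_channel_iterate_close_to_fixed_point
    (d D L : ℕ) (hd : 0 < d) (hD : 0 < D) (hL : 0 < L)
    (A : Fin d → Matrix (Fin D) (Fin D) ℂ)
    (Λ : Matrix (Fin D) (Fin D) ℂ) (hΛ : Λ.PosSemidef) (htr : Λ.trace = 1)
    (hA : ∑ i, A i * (A i)ᴴ = 1)
    (hfix : ∑ i, (A i)ᴴ * Λ * A i = Λ)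
    (P : Matrix (Fin D) (Fin D) ℂ)
    (hP : Pᴴ = P) (hP2 : P * P = P) (hPΛ : P * Λ = Λ * P) :
    traceNorm
        ((fun X => ∑ i, (P * A i * P)ᴴ * X * (P * A i * P))^[L] Λ - Λ) ≤
      2 * (L : ℝ) * (Λ - P * Λ * P).trace.re ∧
    1 - 2 * (L : ℝ) * (Λ - P * Λ * P).trace.re ≤
      ((fun X => ∑ i, (P * A i * P)ᴴ * X * (P * A i * P))^[L] Λ).trace.re := by
  set Et : Matrix (Fin D) (Fin D) ℂ → Matrix (Fin D) (Fin D) ℂ :=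
    fun X => ∑ i, (P * A i * P)ᴴ * X * (P * A i * P) with hEt
  set Δ : Matrix (Fin D) (Fin D) ℂ := Λ - P * Λ * P with hΔdef
  set EΔ : Matrix (Fin D) (Fin D) ℂ := ∑ i, (A i)ᴴ * Δ * (A i) with hEΔdef
  set C : Matrix (Fin D) (Fin D) ℂ := Δ + P * EΔ * P with hCdef
  have hPΛP : P * Λ * P = Λ * P := by rw [hPΛ, mul_assoc, hP2]
  have hQ : (1 - P : Matrix (Fin D) (Fin D) ℂ)ᴴ = 1 - P := by
    rw [conjTranspose_sub, conjTranspose_one, hP]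
  -- Δ is PSD
  have hΔeq : Δ = (1 - P) * Λ * (1 - P)ᴴ := by
    rw [hQ, hΔdef]
    have : (1 - P) * Λ * (1 - P) = Λ - Λ * P - (P * Λ - P * Λ * P) := by noncomm_ring
    rw [this]
    simp only [hPΛ, mul_assoc, hP2]
    abel
  have hΔ : Δ.PosSemidef := hΔeq ▸ hΛ.mul_mul_conjTranspose_same (1 - P)
  -- 1 - P is PSD
  have hQpsd : ((1 : Matrix (Fin D) (Fin D) ℂ) - P).PosSemidef := by
    have := Matrix.posSemidef_conjTranspose_mul_self ((1 : Matrix (Fin D) (Fin D) ℂ) - P)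
    have heq : ((1:Matrix (Fin D) (Fin D) ℂ) - P)ᴴ * (1 - P) = 1 - P := by
      rw [hQ]
      have : ((1:Matrix (Fin D) (Fin D) ℂ) - P) * (1 - P) = 1 - P - (P - P * P) := by
        noncomm_ring
      rw [this, hP2]; abel
    rwa [heq] at this
  have hEΔ : EΔ.PosSemidef :=
    psd_sum' _ _ fun i _ => hΔ.conjTranspose_mul_mul_same (A i)
  have hPXP_psd : ∀ {X : Matrix (Fin D) (Fin D) ℂ}, X.PosSemidef →
      (P * X * P).PosSemidef := fun hX => by
    have := hX.mul_mul_conjTranspose_same P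
    rwa [hP] at this
  have hC : C.PosSemidef := hΔ.add (hPXP_psd hEΔ)
  -- key step : Et Λ = Λ - C
  have hAconj : ∀ i, (P * A i * P)ᴴ = P * (A i)ᴴ * P := by
    intro i; rw [conjTranspose_mul, conjTranspose_mul, hP, mul_assoc]
  have hPLP : P * Λ * P = Λ - Δ := by rw [hΔdef]; abel
  have hstep : Et Λ = Λ - C := by
    have term_eq : ∀ i, (P * A i * P)ᴴ * Λ * (P * A i * P) =
        P * ((A i)ᴴ * Λ * A i) * P - P * ((A i)ᴴ * Δ * A i) * P := by
      intro i
      rw [hAconj i]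
      have h1 : P * (A i)ᴴ * P * Λ * (P * A i * P) =
          P * ((A i)ᴴ * (P * Λ * P * A i)) * P := by noncomm_ring
      rw [h1, hPLP]
      noncomm_ring
    calc Et Λ = ∑ i, (P * ((A i)ᴴ * Λ * A i) * P - P * ((A i)ᴴ * Δ * A i) * P) := by
          rw [hEt]; exact Finset.sum_congr rfl fun i _ => term_eq i
      _ = P * (∑ i, (A i)ᴴ * Λ * A i) * P - P * EΔ * P := by
          rw [Finset.sum_sub_distrib, hEΔdef, Finset.mul_sum, Finset.sum_mul,
            Finset.mul_sum, Finset.sum_mul]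
      _ = Λ - C := by rw [hfix, hPLP, hCdef]; abel
  -- linearity of Et
  have hlin : ∀ X Y, Et (X - Y) = Et X - Et Y := by
    intro X Y
    simp only [hEt, mul_sub, sub_mul, Finset.sum_sub_distrib]
  have hlin_sum : ∀ {ι : Type} (s : Finset ι) (f : ι → Matrix (Fin D) (Fin D) ℂ),
      Et (∑ j ∈ s, f j) = ∑ j ∈ s, Et (f j) := by
    intro ι s f
    simp only [hEt, Finset.mul_sum, Finset.sum_mul]
    exact Finset.sum_comm
  -- iterate formula
  have hiter : ∀ k, Et^[k] Λ = Λ - ∑ j ∈ Finset.range k, Et^[j] C := by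
    intro k
    induction k with
    | zero => simp
    | succ k ih =>
      rw [Function.iterate_succ_apply', ih, hlin, hstep, hlin_sum]
      have : ∑ j ∈ Finset.range k, Et (Et^[j] C) = ∑ j ∈ Finset.range k, Et^[j+1] C :=
        Finset.sum_congr rfl fun j _ => (Function.iterate_succ_apply' Et j C).symm
      rw [this, Finset.sum_range_succ']
      simp only [Function.iterate_zero, id_eq]
      abel
  -- Et is PSD preserving
  have hEtpsd : ∀ {X : Matrix (Fin D) (Fin D) ℂ}, X.PosSemidef → (Et X).PosSemidef := by
    intro X hX
    exact psd_sum' _ _ fun i _ => hX.conjTranspose_mul_mul_same (P * A i * P)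
  -- 1 - F is PSD where F = ∑ Ãᵢ Ãᵢᴴ
  set F : Matrix (Fin D) (Fin D) ℂ := ∑ i, (P * A i * P) * (P * A i * P)ᴴ with hFdef
  set G : Matrix (Fin D) (Fin D) ℂ := ∑ i, A i * P * (A i)ᴴ with hGdef
  have hFeq : F = P * G * P := by
    rw [hFdef, hGdef, Finset.mul_sum, Finset.sum_mul]
    refine Finset.sum_congr rfl fun i _ => ?_
    rw [hAconj i]
    have h1 : P * A i * P * (P * (A i)ᴴ * P) = P * (A i * (P * P) * (A i)ᴴ) * P := by
      noncomm_ring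
    rw [h1, hP2]
  have h1G : (1 - G : Matrix (Fin D) (Fin D) ℂ) = ∑ i, A i * (1 - P) * (A i)ᴴ := by
    have : ∑ i, A i * (1 - P) * (A i)ᴴ = ∑ i, (A i * (A i)ᴴ - A i * P * (A i)ᴴ) :=
      Finset.sum_congr rfl fun i _ => by noncomm_ring
    rw [this, Finset.sum_sub_distrib, hA, hGdef]
  have h1Gpsd : ((1 : Matrix (Fin D) (Fin D) ℂ) - G).PosSemidef := by
    rw [h1G]
    refine psd_sum' _ _ fun i _ => ?_
    have := hQpsd.mul_mul_conjTranspose_same (A i)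
    exact this
  have hFle : ((1 : Matrix (Fin D) (Fin D) ℂ) - F).PosSemidef := by
    have heq : (1 : Matrix (Fin D) (Fin D) ℂ) - F = (1 - P) + P * (1 - G) * P := by
      rw [hFeq]
      have : P * ((1:Matrix (Fin D) (Fin D) ℂ) - G) * P = P * P - P * G * P := by
        noncomm_ring
      rw [this, hP2]; abel
    rw [heq]
    exact hQpsd.add (hPXP_psd h1Gpsd)
  -- trace of Et Y is at most trace of Y for PSD Y
  have htraceEt : ∀ {Y : Matrix (Fin D) (Fin D) ℂ}, Y.PosSemidef →
      (Et Y).trace.re ≤ Y.trace.re := by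
    intro Y hY
    have h1 : (Et Y).trace = (Y * F).trace := by
      rw [hEt, hFdef, Matrix.trace_sum, Finset.mul_sum, Matrix.trace_sum]
      refine Finset.sum_congr rfl fun i _ => ?_
      rw [Matrix.trace_mul_cycle, ← mul_assoc, ← Matrix.trace_mul_comm, ← mul_assoc]
    rw [h1]
    exact trace_mul_le_of_le_one' hY hFle
  -- iterates of C
  have hpsd_iter : ∀ j, (Et^[j] C).PosSemidef := by
    intro j
    induction j with
    | zero => simp only [Function.iterate_zero, id_eq]; exact hC
    | succ j ih => rw [Function.iterate_succ_apply']; exact hEtpsd ih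
  have htr_iter : ∀ j, (Et^[j] C).trace.re ≤ C.trace.re := by
    intro j
    induction j with
    | zero => simp
    | succ j ih =>
      rw [Function.iterate_succ_apply']
      exact le_trans (htraceEt (hpsd_iter j)) ih
  -- trace of C is at most 2δ
  have htrEΔ : EΔ.trace = Δ.trace := by
    rw [hEΔdef, Matrix.trace_sum]
    have : ∀ i : Fin d, ((A i)ᴴ * Δ * A i).trace = (Δ * (A i * (A i)ᴴ)).trace := by
      intro i
      rw [Matrix.trace_mul_cycle, ← mul_assoc, Matrix.trace_mul_comm, ← mul_assoc]
    rw [Finset.sum_congr rfl fun i _ => this i, ← Matrix.trace_sum, ← Finset.mul_sum, hA,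
      mul_one]
  have htrC : C.trace.re ≤ 2 * Δ.trace.re := by
    have h1 : (P * EΔ * P).trace = (EΔ * P).trace := by
      rw [Matrix.trace_mul_cycle, hP2, Matrix.trace_mul_comm]
    have h2 : (EΔ * P).trace.re ≤ EΔ.trace.re := trace_mul_le_of_le_one' hEΔ hQpsd
    have h3 : C.trace.re = Δ.trace.re + (P * EΔ * P).trace.re := by
      rw [hCdef, Matrix.trace_add, Complex.add_re]
    rw [h3, h1]
    have h4 : EΔ.trace.re = Δ.trace.re := by rw [htrEΔ]
    linarith
  -- the sum S
  set S : Matrix (Fin D) (Fin D) ℂ := ∑ j ∈ Finset.range L, Et^[j] C with hSdef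
  have hSpsd : S.PosSemidef := psd_sum' _ _ fun j _ => hpsd_iter j
  have htrS : S.trace.re ≤ 2 * (L : ℝ) * Δ.trace.re := by
    have h1 : S.trace.re = ∑ j ∈ Finset.range L, (Et^[j] C).trace.re := by
      rw [hSdef, Matrix.trace_sum, Complex.re_sum]
    rw [h1]
    calc ∑ j ∈ Finset.range L, (Et^[j] C).trace.re
        ≤ ∑ j ∈ Finset.range L, C.trace.re :=
          Finset.sum_le_sum fun j _ => htr_iter j
      _ = (L : ℝ) * C.trace.re := by rw [Finset.sum_const, Finset.card_range, nsmul_eq_mul]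
      _ ≤ (L : ℝ) * (2 * Δ.trace.re) := by
          exact mul_le_mul_of_nonneg_left htrC (Nat.cast_nonneg L)
      _ = 2 * (L : ℝ) * Δ.trace.re := by ring
  have hdiff : Et^[L] Λ - Λ = -S := by rw [hiter L, hSdef]; abel
  constructor
  · rw [hdiff, traceNorm_neg_psd' hSpsd]
    exact htrS
  · have h1 : (Et^[L] Λ).trace.re = 1 - S.trace.re := by
      rw [hiter L, ← hSdef, Matrix.trace_sub, htr, Complex.sub_re, Complex.one_re]
    rw [h1]
    linarith
end

section
/- Let d, D, n be positive integers and A₁,…,A_d be D×D complex matrices. Define the linear map Γ_n from D×D matrices to ℂ^{d^n} by (Γ_n(X))_{(i₁,…,i_n)} = tr(X A_{i₁}⋯A_{i_n}) for (i₁,…,i_n) ∈ {1,…,d}^n. Define the linear maps Φ(X) = ∑_{i=1}^d A_i X A_i† and Φ^∞(X) = tr(X)·𝟙/D on D×D matrices. Then for every D×D matrix X, | ‖Γ_n(X)‖² − (1/D)·‖X‖_F² | ≤ D · ‖Φ^n − Φ^∞‖_op · ‖X‖_F², where ‖Γ_n(X)‖ is the ℓ²-norm on ℂ^{d^n}, ‖·‖_F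 is the Frobenius norm, and ‖Φ^n − Φ^∞‖_op is the operator norm of the map Φ^n − Φ^∞ with respect to the Frobenius norm on D×D matrices. -/
open Matrix

/-- The Frobenius norm `(tr Mᴴ M)^(1/2)` of a complex square matrix. -/
noncomputable def frobNorm {n : Type*} [Fintype n] (M : Matrix n n ℂ) : ℝ :=
  Real.sqrt ((Mᴴ * M).trace.re)

/-- The operator norm of a map on `D × D` complex matrices with respect to the
Frobenius norm. -/
noncomputable def opNormF {D : ℕ}
    (T : Matrix (Fin D) (Fin D) ℂ → Matrix (Fin D) (Fin D) ℂ) : ℝ :=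
  sSup {r : ℝ | ∃ X : Matrix (Fin D) (Fin D) ℂ, frobNorm X = 1 ∧ r = frobNorm (T X)}

/-- The map sending a boundary condition `X` to the MPS vector of `n` sites:
`(Γ_n X)_{(i₁,…,i_n)} = tr (X A_{i₁} ⋯ A_{i_n})`. -/
noncomputable def Gamma (d D n : ℕ) (A : Fin d → Matrix (Fin D) (Fin D) ℂ)
    (X : Matrix (Fin D) (Fin D) ℂ) : (Fin n → Fin d) → ℂ :=
  fun i => (X * (List.ofFn fun t => A (i t)).prod).trace

section Aux

variable {d D : ℕ}

lemma frob_trace_re (M : Matrix (Fin D) (Fin D) ℂ) :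
    (Mᴴ * M).trace.re = ∑ a, ∑ b, ‖M a b‖ ^ 2 := by
  have h : (Mᴴ * M).trace = ∑ b, ∑ a, (starRingEnd ℂ) (M a b) * M a b := by
    simp [Matrix.trace, Matrix.diag, Matrix.mul_apply, Matrix.conjTranspose_apply]
  rw [h, Finset.sum_comm]
  simp only [Complex.re_sum]
  refine Finset.sum_congr rfl fun a _ => Finset.sum_congr rfl fun b _ => ?_
  simp only [Complex.mul_re, Complex.conj_re, Complex.conj_im]
  rw [Complex.sq_norm, Complex.normSq_apply]
  ring

lemma frobNorm_eq (M : Matrix (Fin D) (Fin D) ℂ) :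
    frobNorm M = Real.sqrt (∑ a, ∑ b, ‖M a b‖ ^ 2) := by
  rw [frobNorm, frob_trace_re]

lemma frobNorm_nonneg (M : Matrix (Fin D) (Fin D) ℂ) : 0 ≤ frobNorm M :=
  Real.sqrt_nonneg _

lemma frobNorm_sq (M : Matrix (Fin D) (Fin D) ℂ) :
    frobNorm M ^ 2 = ∑ a, ∑ b, ‖M a b‖ ^ 2 := by
  rw [frobNorm_eq, Real.sq_sqrt]
  positivity

lemma frobNorm_std (a c : Fin D) : frobNorm (single a c (1 : ℂ)) = 1 := by
  rw [frobNorm_eq]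
  have h : ∀ x y : Fin D,
      ‖single a c (1 : ℂ) x y‖ ^ 2 =
        (if a = x then 1 else 0) * (if c = y then 1 else 0) := by
    intro x y
    simp only [Matrix.single, Matrix.of_apply, ite_and]
    split_ifs <;> simp
  simp only [h]
  rw [← Finset.sum_mul_sum]
  rw [Finset.sum_ite_eq, Finset.sum_ite_eq]
  simp

/-- identification of matrices with a Euclidean space -/
noncomputable def matE (D : ℕ) :
    Matrix (Fin D) (Fin D) ℂ ≃ₗ[ℂ] EuclideanSpace ℂ (Fin D × Fin D) where
  toFun M := (WithLp.equiv 2 _).symm (fun p => M p.1 p.2)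
  invFun v := Matrix.of (fun a b => v (a, b))
  map_add' _ _ := rfl
  map_smul' _ _ := rfl
  left_inv _ := rfl
  right_inv _ := rfl

lemma frobNorm_eq_norm (M : Matrix (Fin D) (Fin D) ℂ) : frobNorm M = ‖matE D M‖ := by
  rw [EuclideanSpace.norm_eq, frobNorm_eq]
  congr 1
  rw [Fintype.sum_prod_type]
  rfl

lemma bddAbove_opSet (T : Matrix (Fin D) (Fin D) ℂ →ₗ[ℂ] Matrix (Fin D) (Fin D) ℂ) :
    BddAbove {r : ℝ | ∃ X : Matrix (Fin D) (Fin D) ℂ, frobNorm X = 1 ∧ r = frobNorm (T X)} := by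
  set L : EuclideanSpace ℂ (Fin D × Fin D) →ₗ[ℂ] EuclideanSpace ℂ (Fin D × Fin D) :=
    ((matE D).toLinearMap.comp T).comp (matE D).symm.toLinearMap with hL
  refine ⟨‖LinearMap.toContinuousLinearMap L‖, ?_⟩
  rintro r ⟨X, hX, rfl⟩
  have h1 : frobNorm (T X) = ‖LinearMap.toContinuousLinearMap L (matE D X)‖ := by
    rw [frobNorm_eq_norm]
    simp [hL, LinearMap.toContinuousLinearMap]
  rw [h1]
  calc ‖LinearMap.toContinuousLinearMap L (matE D X)‖
      ≤ ‖LinearMap.toContinuousLinearMap L‖ * ‖matE D X‖ :=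
        ContinuousLinearMap.le_opNorm _ _
    _ = ‖LinearMap.toContinuousLinearMap L‖ := by rw [← frobNorm_eq_norm, hX, mul_one]

/-- the channel as a linear map -/
noncomputable def PhiLin (A : Fin d → Matrix (Fin D) (Fin D) ℂ) :
    Matrix (Fin D) (Fin D) ℂ →ₗ[ℂ] Matrix (Fin D) (Fin D) ℂ where
  toFun Z := ∑ i, A i * Z * (A i)ᴴ
  map_add' Y Z := by
    simp [Matrix.mul_add, Matrix.add_mul, Finset.sum_add_distrib]
  map_smul' c Z := by
    simp [Matrix.mul_smul, Matrix.smul_mul, Finset.smul_sum]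

/-- the fixed-point projection as a linear map -/
noncomputable def trLin (D : ℕ) :
    Matrix (Fin D) (Fin D) ℂ →ₗ[ℂ] Matrix (Fin D) (Fin D) ℂ where
  toFun Y := (Y.trace / (D : ℂ)) • (1 : Matrix (Fin D) (Fin D) ℂ)
  map_add' Y Z := by
    simp [Matrix.trace_add, add_div, add_smul]
  map_smul' c Z := by
    simp only [Matrix.trace_smul, smul_eq_mul, RingHom.id_apply, smul_smul]
    rw [mul_div_assoc]

noncomputable def TLin (A : Fin d → Matrix (Fin D) (Fin D) ℂ) (n : ℕ) :
    Matrix (Fin D) (Fin D) ℂ →ₗ[ℂ] Matrix (Fin D) (Fin D) ℂ :=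
  (PhiLin A ^ n : Matrix (Fin D) (Fin D) ℂ →ₗ[ℂ] Matrix (Fin D) (Fin D) ℂ) - trLin D

lemma TLin_coe (A : Fin d → Matrix (Fin D) (Fin D) ℂ) (n : ℕ) :
    (fun Y : Matrix (Fin D) (Fin D) ℂ =>
        (fun Z => ∑ i, A i * Z * (A i)ᴴ)^[n] Y -
          (Y.trace / (D : ℂ)) • (1 : Matrix (Fin D) (Fin D) ℂ)) = ⇑(TLin A n) := by
  funext Y
  simp only [TLin, LinearMap.sub_apply, Module.End.pow_apply]
  rfl

lemma le_opNormF (A : Fin d → Matrix (Fin D) (Fin D) ℂ) (n : ℕ)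
    (Y : Matrix (Fin D) (Fin D) ℂ) (hY : frobNorm Y = 1) :
    frobNorm ((fun Z => ∑ i, A i * Z * (A i)ᴴ)^[n] Y -
        (Y.trace / (D : ℂ)) • (1 : Matrix (Fin D) (Fin D) ℂ)) ≤
      opNormF (fun W : Matrix (Fin D) (Fin D) ℂ =>
        (fun Z => ∑ i, A i * Z * (A i)ᴴ)^[n] W -
          (W.trace / (D : ℂ)) • (1 : Matrix (Fin D) (Fin D) ℂ)) := by
  have hb := bddAbove_opSet (TLin A n)
  rw [← TLin_coe A n] at hb
  exact le_csSup hb ⟨Y, hY, rfl⟩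

lemma sum_prod_conj (A : Fin d → Matrix (Fin D) (Fin D) ℂ) (n : ℕ)
    (Z : Matrix (Fin D) (Fin D) ℂ) :
    ∑ i : Fin n → Fin d,
        (List.ofFn fun t => A (i t)).prod * Z * ((List.ofFn fun t => A (i t)).prod)ᴴ
      = (fun W => ∑ j, A j * W * (A j)ᴴ)^[n] Z := by
  induction n with
  | zero => simp
  | succ n ih =>
    rw [Function.iterate_succ_apply', ← ih]
    rw [← Fintype.sum_equiv (Fin.consEquiv (fun _ : Fin (n+1) => Fin d))
      (fun p => A p.1 * ((List.ofFn fun t => A (p.2 t)).prod * Z *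
        ((List.ofFn fun t => A (p.2 t)).prod)ᴴ) * (A p.1)ᴴ)
      (fun i => (List.ofFn fun t => A (i t)).prod * Z * ((List.ofFn fun t => A (i t)).prod)ᴴ)
      ?_]
    · rw [Fintype.sum_prod_type]
      simp only [← Finset.sum_mul, ← Finset.mul_sum]
    · rintro ⟨j, f⟩
      have hl : (List.ofFn fun t => A ((Fin.cons j f : Fin (n+1) → Fin d) t)) =
          A j :: List.ofFn fun t => A (f t) := by
        rw [List.ofFn_succ]
        simp
      simp only [Fin.consEquiv_apply] at *
      rw [hl, List.prod_cons, Matrix.conjTranspose_mul]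
      noncomm_ring

lemma entry_lemma (P : Matrix (Fin D) (Fin D) ℂ) (a c b e : Fin D) :
    (P * single a c (1 : ℂ) * Pᴴ) b e = P b a * (starRingEnd ℂ) (P e c) := by
  rw [Matrix.mul_apply]
  have h1 : ∀ q, (P * single a c (1 : ℂ)) b q = if q = c then P b a else 0 := by
    intro q
    rw [Matrix.mul_apply]
    simp only [Matrix.single, Matrix.of_apply, mul_ite, mul_one, mul_zero, ite_and]
    rw [Finset.sum_ite_eq]
    simp [eq_comm]
  simp only [h1, Matrix.conjTranspose_apply]
  simp [Finset.sum_ite_eq', RingHom.map_one]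

lemma trace_std (a c : Fin D) :
    (single a c (1 : ℂ)).trace = if a = c then 1 else 0 := by
  simp only [Matrix.trace, Matrix.diag, Matrix.single, Matrix.of_apply, ite_and]
  by_cases h : a = c
  · subst h; simp
  · simp only [Finset.sum_ite_eq, Finset.mem_univ, if_true]
    simp [h, Ne.symm h]

end Aux

/-- `| ‖Γ_n(X)‖² − ‖X‖_F²/D | ≤ D ‖Φ^n − Φ^∞‖_op ‖X‖_F²`, where
`Φ(X) = ∑ i, A i X (A i)ᴴ` and `Φ^∞(X) = tr(X) 𝟙 / D`. -/
theorem quantum_expander_quasi_isometry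
    (d D n : ℕ) (hd : 0 < d) (hD : 0 < D) (hn : 0 < n)
    (A : Fin d → Matrix (Fin D) (Fin D) ℂ)
    (X : Matrix (Fin D) (Fin D) ℂ) :
    |(∑ i : Fin n → Fin d, ‖Gamma d D n A X i‖ ^ 2) -
        (1 / (D : ℝ)) * frobNorm X ^ 2| ≤
      (D : ℝ) *
        opNormF (fun Y =>
          (fun Z => ∑ i, A i * Z * (A i)ᴴ)^[n] Y -
            (Y.trace / (D : ℂ)) • (1 : Matrix (Fin D) (Fin D) ℂ)) *
        frobNorm X ^ 2 := by
  classical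
  set Φ : Matrix (Fin D) (Fin D) ℂ → Matrix (Fin D) (Fin D) ℂ :=
    fun Z => ∑ i, A i * Z * (A i)ᴴ with hΦ
  set T : Matrix (Fin D) (Fin D) ℂ → Matrix (Fin D) (Fin D) ℂ :=
    fun Y => Φ^[n] Y - (Y.trace / (D : ℂ)) • 1 with hT
  set opT : ℝ := opNormF T with hopT
  set P : (Fin n → Fin d) → Matrix (Fin D) (Fin D) ℂ :=
    fun i => (List.ofFn fun t => A (i t)).prod with hP
  -- basic facts about T
  have hTle : ∀ Y : Matrix (Fin D) (Fin D) ℂ, frobNorm Y = 1 → frobNorm (T Y) ≤ opT :=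
    fun Y hY => le_opNormF A n Y hY
  have hop0 : 0 ≤ opT := by
    refine le_trans (frobNorm_nonneg (T (single ⟨0, hD⟩ ⟨0, hD⟩ (1 : ℂ)))) ?_
    exact hTle _ (frobNorm_std _ _)
  -- the key entrywise identity
  have key : ∀ a c b e : Fin D,
      (∑ i : Fin n → Fin d, P i b a * (starRingEnd ℂ) (P i e c))
        = Φ^[n] (single a c (1 : ℂ)) b e := by
    intro a c b e
    have h := congrFun (congrFun (sum_prod_conj A n (single a c (1 : ℂ))) b) e
    rw [hΦ, ← h, Matrix.sum_apply]
    exact Finset.sum_congr rfl fun i _ => (entry_lemma (P i) a c b e).symm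
  -- complex form of the LHS sum
  set C : ℂ := ∑ i : Fin n → Fin d,
    Gamma d D n A X i * (starRingEnd ℂ) (Gamma d D n A X i) with hC
  have habs : (∑ i : Fin n → Fin d, ‖Gamma d D n A X i‖ ^ 2) = C.re := by
    rw [hC, Complex.re_sum]
    refine Finset.sum_congr rfl fun i _ => ?_
    rw [Complex.mul_conj, Complex.ofReal_re, Complex.sq_norm]
  have tr_expand : ∀ i, Gamma d D n A X i =
      ∑ p : Fin D × Fin D, X p.1 p.2 * P i p.2 p.1 := by
    intro i
    rw [Fintype.sum_prod_type]
    simp [Gamma, Matrix.trace, Matrix.diag, Matrix.mul_apply, hP]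
  have hC2 : C = ∑ p : Fin D × Fin D, ∑ q : Fin D × Fin D,
      (X p.1 p.2 * (starRingEnd ℂ) (X q.1 q.2)) *
        Φ^[n] (single p.1 q.1 (1 : ℂ)) p.2 q.2 := by
    have h1 : C = ∑ i : Fin n → Fin d, ∑ p : Fin D × Fin D, ∑ q : Fin D × Fin D,
        (X p.1 p.2 * (starRingEnd ℂ) (X q.1 q.2)) *
          (P i p.2 p.1 * (starRingEnd ℂ) (P i q.2 q.1)) := by
      rw [hC]
      refine Finset.sum_congr rfl fun i _ => ?_
      rw [tr_expand i, map_sum, Finset.sum_mul_sum]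
      refine Finset.sum_congr rfl fun p _ => Finset.sum_congr rfl fun q _ => ?_
      simp only [_root_.map_mul]
      ring
    rw [h1, Finset.sum_comm]
    refine Finset.sum_congr rfl fun p _ => ?_
    rw [Finset.sum_comm]
    refine Finset.sum_congr rfl fun q _ => ?_
    rw [← Finset.mul_sum, key]
  -- split off the fixed-point part
  have split : ∀ p q : Fin D × Fin D,
      (X p.1 p.2 * (starRingEnd ℂ) (X q.1 q.2)) *
          Φ^[n] (single p.1 q.1 (1 : ℂ)) p.2 q.2
        = (X p.1 p.2 * (starRingEnd ℂ) (X q.1 q.2)) *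
            T (single p.1 q.1 (1 : ℂ)) p.2 q.2
          + (X p.1 p.2 * (starRingEnd ℂ) (X q.1 q.2)) *
            ((if p.1 = q.1 then (1 : ℂ) else 0) / (D : ℂ) *
              (if p.2 = q.2 then (1 : ℂ) else 0)) := by
    intro p q
    rw [hT]
    simp only [Matrix.sub_apply, Matrix.smul_apply, Matrix.one_apply, trace_std,
      smul_eq_mul]
    ring
  set G : ℂ := ∑ p : Fin D × Fin D, ∑ q : Fin D × Fin D,
    (X p.1 p.2 * (starRingEnd ℂ) (X q.1 q.2)) *
      T (single p.1 q.1 (1 : ℂ)) p.2 q.2 with hG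
  have hCGK : C = G + (1 / (D : ℂ)) *
      ∑ p : Fin D × Fin D, X p.1 p.2 * (starRingEnd ℂ) (X p.1 p.2) := by
    rw [hC2]
    simp only [split]
    simp only [Finset.sum_add_distrib]
    congr 1
    rw [Finset.mul_sum]
    refine Finset.sum_congr rfl fun p _ => ?_
    have hterm : ∀ q : Fin D × Fin D,
        X p.1 p.2 * (starRingEnd ℂ) (X q.1 q.2) *
            ((if p.1 = q.1 then (1 : ℂ) else 0) / (D : ℂ) *
              (if p.2 = q.2 then (1 : ℂ) else 0))
          = if q = p then X p.1 p.2 * (starRingEnd ℂ) (X p.1 p.2) / (D : ℂ) else 0 := by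
      intro q
      by_cases hq : q = p
      · subst hq
        simp only [eq_self_iff_true, if_true]
        ring
      · rw [if_neg hq]
        by_cases h1 : p.1 = q.1 <;> by_cases h2 : p.2 = q.2
        · exact absurd (Prod.ext h1.symm h2.symm) hq
        · simp [h2]
        · simp [h1]
        · simp [h1]
    simp only [hterm]
    rw [Finset.sum_ite_eq' Finset.univ p
      (fun q => X p.1 p.2 * (starRingEnd ℂ) (X p.1 p.2) / (D : ℂ))]
    simp only [Finset.mem_univ, if_true]
    ring
  -- identify K with the Frobenius norm
  have hsum : (∑ p : Fin D × Fin D, X p.1 p.2 * (starRingEnd ℂ) (X p.1 p.2))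
      = ((frobNorm X ^ 2 : ℝ) : ℂ) := by
    rw [Fintype.sum_prod_type, frobNorm_sq]
    push_cast
    refine Finset.sum_congr rfl fun a _ => Finset.sum_congr rfl fun b _ => ?_
    rw [Complex.mul_conj]
    norm_cast
    exact (Complex.sq_norm _).symm
  have hCre : C.re = G.re + (1 / (D : ℝ)) * frobNorm X ^ 2 := by
    have h2 : C = G + (((1 / (D : ℝ)) * frobNorm X ^ 2 : ℝ) : ℂ) := by
      rw [hCGK, hsum]
      push_cast
      ring
    rw [h2, Complex.add_re, Complex.ofReal_re]
  -- regroup G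
  have hGsplit : G = ∑ a : Fin D, ∑ c : Fin D, ∑ b : Fin D, ∑ e : Fin D,
      (X a b * (starRingEnd ℂ) (X c e)) * T (single a c (1 : ℂ)) b e := by
    rw [hG, Fintype.sum_prod_type]
    refine Finset.sum_congr rfl fun a _ => ?_
    have h3 : ∀ b : Fin D, (∑ q : Fin D × Fin D,
        X a b * (starRingEnd ℂ) (X q.1 q.2) * T (single a q.1 (1 : ℂ)) b q.2)
        = ∑ c : Fin D, ∑ e : Fin D,
            X a b * (starRingEnd ℂ) (X c e) * T (single a c (1 : ℂ)) b e := by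
      intro b
      rw [Fintype.sum_prod_type]
    simp only [h3]
    rw [Finset.sum_comm]
  -- row norms
  set rw2 : Fin D → ℝ := fun a => Real.sqrt (∑ b, ‖X a b‖ ^ 2) with hrw
  have hrnn : ∀ a, 0 ≤ rw2 a := fun a => Real.sqrt_nonneg _
  have hrsq : ∀ a, rw2 a ^ 2 = ∑ b, ‖X a b‖ ^ 2 := by
    intro a
    rw [hrw]
    exact Real.sq_sqrt (by positivity)
  -- bound each block
  have hblock : ∀ a c : Fin D,
      ‖∑ b : Fin D, ∑ e : Fin D,
          (X a b * (starRingEnd ℂ) (X c e)) * T (single a c (1 : ℂ)) b e‖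
        ≤ rw2 a * rw2 c * opT := by
    intro a c
    set M := T (single a c (1 : ℂ)) with hM
    have habs1 : ‖∑ b : Fin D, ∑ e : Fin D,
        (X a b * (starRingEnd ℂ) (X c e)) * M b e‖
        ≤ ∑ b : Fin D, ∑ e : Fin D,
            ‖X a b‖ * ‖X c e‖ * ‖M b e‖ := by
      refine le_trans (norm_sum_le _ _) ?_
      refine Finset.sum_le_sum fun b _ => ?_
      refine le_trans (norm_sum_le _ _) ?_
      refine Finset.sum_le_sum fun e _ => ?_
      rw [norm_mul, norm_mul, Complex.norm_conj]
    have hMle : frobNorm M ≤ opT := hTle _ (frobNorm_std a c)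
    have hcs : ∑ b : Fin D, ∑ e : Fin D,
        ‖X a b‖ * ‖X c e‖ * ‖M b e‖
        ≤ rw2 a * rw2 c * frobNorm M := by
      have h0 : ∑ b : Fin D, ∑ e : Fin D,
          ‖X a b‖ * ‖X c e‖ * ‖M b e‖
          = ∑ p : Fin D × Fin D,
              (‖X a p.1‖ * ‖X c p.2‖) * ‖M p.1 p.2‖ := by
        rw [Fintype.sum_prod_type]
      rw [h0]
      have hcs2 := Finset.sum_mul_sq_le_sq_mul_sq Finset.univ
        (fun p : Fin D × Fin D => ‖X a p.1‖ * ‖X c p.2‖)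
        (fun p : Fin D × Fin D => ‖M p.1 p.2‖)
      have hf : ∑ p : Fin D × Fin D,
          (‖X a p.1‖ * ‖X c p.2‖) ^ 2
          = (rw2 a * rw2 c) ^ 2 := by
        rw [mul_pow, hrsq, hrsq, Finset.sum_mul_sum, Fintype.sum_prod_type]
        refine Finset.sum_congr rfl fun b _ => Finset.sum_congr rfl fun e _ => ?_
        ring
      have hg : ∑ p : Fin D × Fin D, ‖M p.1 p.2‖ ^ 2 = frobNorm M ^ 2 := by
        rw [frobNorm_sq, Fintype.sum_prod_type]
      rw [hf, hg] at hcs2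
      have hS0 : (0 : ℝ) ≤ ∑ p : Fin D × Fin D,
          (‖X a p.1‖ * ‖X c p.2‖) * ‖M p.1 p.2‖ :=
        Finset.sum_nonneg fun p _ => by positivity
      have ht0 : 0 ≤ rw2 a * rw2 c * frobNorm M :=
        mul_nonneg (mul_nonneg (hrnn a) (hrnn c)) (frobNorm_nonneg M)
      have h7 := Real.sqrt_le_sqrt hcs2
      rw [Real.sqrt_sq hS0] at h7
      refine le_trans h7 ?_
      rw [show (rw2 a * rw2 c) ^ 2 * frobNorm M ^ 2 = (rw2 a * rw2 c * frobNorm M) ^ 2 by ring,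
        Real.sqrt_sq ht0]
    refine le_trans habs1 (le_trans hcs ?_)
    exact mul_le_mul_of_nonneg_left hMle (mul_nonneg (hrnn a) (hrnn c))
  -- put everything together
  have hGbound : ‖G‖ ≤ (D : ℝ) * opT * frobNorm X ^ 2 := by
    calc ‖G‖
        ≤ ∑ a : Fin D, ∑ c : Fin D, rw2 a * rw2 c * opT := by
          rw [hGsplit]
          refine le_trans (norm_sum_le _ _) ?_
          refine Finset.sum_le_sum fun a _ => ?_
          refine le_trans (norm_sum_le _ _) ?_
          exact Finset.sum_le_sum fun c _ => hblock a c
      _ = (∑ a : Fin D, rw2 a) * (∑ c : Fin D, rw2 c) * opT := by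
          rw [Finset.sum_mul_sum, Finset.sum_mul]
          refine Finset.sum_congr rfl fun a _ => ?_
          rw [Finset.sum_mul]
      _ = (∑ a : Fin D, rw2 a) ^ 2 * opT := by ring
      _ ≤ ((D : ℝ) * ∑ a : Fin D, rw2 a ^ 2) * opT := by
          refine mul_le_mul_of_nonneg_right ?_ hop0
          have h4 := sq_sum_le_card_mul_sum_sq (s := Finset.univ) (f := rw2)
          simpa [Finset.card_univ] using h4
      _ = (D : ℝ) * opT * frobNorm X ^ 2 := by
          have h5 : ∑ a : Fin D, rw2 a ^ 2 = frobNorm X ^ 2 := by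
            rw [frobNorm_sq]
            exact Finset.sum_congr rfl fun a _ => hrsq a
          rw [h5]
          ring
  -- final assembly
  rw [habs, hCre]
  have h6 : G.re + 1 / (D : ℝ) * frobNorm X ^ 2 - 1 / (D : ℝ) * frobNorm X ^ 2 = G.re := by
    ring
  rw [h6]
  exact le_trans (le_trans (Complex.abs_re_le_norm G) hGbound) (le_of_eq rfl)
end

section
/- Let d, D, n be positive integers and A₁,…,A_d be D×D complex matrices. Define the linear map Γ_n from D×D matrices to ℂ^{d^n} by (Γ_n(X))_{(i₁,…,i_n)} = tr(X A_{i₁}⋯A_{i_n}) for (i₁,…,i_n) ∈ {1,…,d}^n, and the linear maps Φ(X) = ∑_{i=1}^d A_i X A_i† and Φ^∞(X) = tr(X)·𝟙/D on D×D matrices. If ‖Φ^n − Φ^∞‖_op < 1/D², where ‖·‖_op is the operator norm with respect to the Frobenius norm on D×D matrices, then Γ_n is injective. -/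
open Matrix

/- ######################  Auxiliary lemmas  ###################### -/

attribute [local instance] Matrix.frobeniusSeminormedAddCommGroup
  Matrix.frobeniusNormedAddCommGroup Matrix.frobeniusNormedRing Matrix.frobeniusIsBoundedSMul
  Matrix.frobeniusNormedSpace Matrix.frobeniusNormSMulClass

namespace MPSAux

variable {D d : ℕ}

lemma normSqSum (M : Matrix (Fin D) (Fin D) ℂ) :
    ‖M‖ ^ 2 = ∑ i, ∑ j, ‖M i j‖ ^ 2 := by
  rw [Matrix.frobenius_norm_def, ← Real.sqrt_eq_rpow, Real.sq_sqrt]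
  · norm_num
  · positivity

lemma frobNorm_eq (M : Matrix (Fin D) (Fin D) ℂ) : frobNorm M = ‖M‖ := by
  rw [frobNorm, Matrix.frobenius_norm_def, ← Real.sqrt_eq_rpow]
  congr 1
  rw [Matrix.trace]
  rw [Complex.re_sum]
  simp only [Matrix.diag_apply, Matrix.mul_apply, Matrix.conjTranspose_apply]
  rw [Finset.sum_comm]
  refine Finset.sum_congr rfl fun i _ => ?_
  rw [Complex.re_sum]
  refine Finset.sum_congr rfl fun j _ => ?_
  have h2 : star (M j i) * M j i = ((‖M j i‖ ^ 2 : ℝ) : ℂ) := by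
    rw [Complex.star_def, mul_comm, Complex.mul_conj]
    simp [Complex.normSq_eq_norm_sq]
  rw [h2, Complex.ofReal_re, ← Real.rpow_natCast (‖M j i‖) 2]
  norm_num

lemma entry_le (M : Matrix (Fin D) (Fin D) ℂ) (a b : Fin D) : ‖M a b‖ ≤ ‖M‖ := by
  have h1 : ‖M a b‖ ^ 2 ≤ ‖M‖ ^ 2 := by
    rw [normSqSum]
    calc ‖M a b‖ ^ 2 ≤ ∑ j, ‖M a j‖ ^ 2 :=
          Finset.single_le_sum (f := fun j => ‖M a j‖ ^ 2)
            (fun j _ => sq_nonneg _) (Finset.mem_univ b)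
      _ ≤ ∑ i, ∑ j, ‖M i j‖ ^ 2 :=
          Finset.single_le_sum (f := fun i => ∑ j, ‖M i j‖ ^ 2)
            (fun i _ => Finset.sum_nonneg fun j _ => sq_nonneg _) (Finset.mem_univ a)
  nlinarith [norm_nonneg (M a b), norm_nonneg M]

lemma norm_stdBasis (a e : Fin D) : ‖single a e (1:ℂ)‖ = 1 := by
  rw [Matrix.frobenius_norm_def]
  have : ∀ i j : Fin D, ‖single a e (1:ℂ) i j‖ ^ (2:ℝ) =
      if a = i ∧ e = j then 1 else 0 := by
    intro i j
    by_cases h : a = i ∧ e = j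
    · obtain ⟨rfl, rfl⟩ := h; simp
    · rw [Matrix.single_apply_of_ne _ _ _ _ _ h]
      simp [h, Real.zero_rpow]
  simp_rw [this]
  simp [ite_and]

lemma iterate_phi (A : Fin d → Matrix (Fin D) (Fin D) ℂ) (n : ℕ) (Z : Matrix (Fin D) (Fin D) ℂ) :
    (fun Z => ∑ i, A i * Z * (A i)ᴴ)^[n] Z
      = ∑ i : Fin n → Fin d,
          (List.ofFn fun t => A (i t)).prod * Z * ((List.ofFn fun t => A (i t)).prod)ᴴ := by
  induction n generalizing Z with
  | zero =>
      simp
  | succ n ih =>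
      rw [Function.iterate_succ_apply', ih]
      show ∑ j, A j * (∑ i : Fin n → Fin d, _) * (A j)ᴴ = _
      rw [← Equiv.sum_comp (Fin.consEquiv (fun _ : Fin (n+1) => Fin d))
        (fun i : Fin (n+1) → Fin d =>
          (List.ofFn fun t => A (i t)).prod * Z * ((List.ofFn fun t => A (i t)).prod)ᴴ)]
      rw [Fintype.sum_prod_type]
      refine Finset.sum_congr rfl fun j _ => ?_
      rw [Finset.mul_sum, Finset.sum_mul]
      refine Finset.sum_congr rfl fun g _ => ?_
      simp [Fin.consEquiv, List.ofFn_succ, List.prod_cons, Matrix.conjTranspose_mul, mul_assoc]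

lemma trace_stdBasis (a e : Fin D) :
    (single a e (1:ℂ)).trace = if a = e then 1 else 0 := by
  rw [Matrix.trace]
  by_cases h : a = e
  · subst h
    simp [Matrix.single, Matrix.diag_apply]
  · simp only [Matrix.diag_apply]
    rw [Finset.sum_eq_zero, if_neg h]
    intro i _
    exact Matrix.single_apply_of_ne _ _ _ _ _ (by rintro ⟨rfl, rfl⟩; exact h rfl)

set_option maxRecDepth 10000 in
lemma keyB (X B : Matrix (Fin D) (Fin D) ℂ) :
    ∑ a : Fin D, ∑ e : Fin D, (X * (B * single a e (1:ℂ) * Bᴴ) * Xᴴ) a e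
      = (X * B).trace * (starRingEnd ℂ) ((X * B).trace) := by
  have hentry : ∀ (Y : Matrix (Fin D) (Fin D) ℂ) (a e : Fin D),
      (Y * single a e (1:ℂ) * Yᴴ) a e = Y a a * star (Y e e) := by
    intro Y a e
    rw [Matrix.mul_apply]
    rw [Finset.sum_eq_single e]
    · rw [Matrix.mul_single_apply_same, mul_one, Matrix.conjTranspose_apply]
    · intro q _ hq
      rw [Matrix.mul_single_apply_of_ne (hbj := hq), zero_mul]
    · intro h; exact absurd (Finset.mem_univ e) h
  have hY : ∀ a e : Fin D, X * (B * single a e (1:ℂ) * Bᴴ) * Xᴴ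
      = (X * B) * single a e (1:ℂ) * (X * B)ᴴ := by
    intro a e
    rw [Matrix.conjTranspose_mul]
    simp only [mul_assoc]
  calc ∑ a : Fin D, ∑ e : Fin D, (X * (B * single a e (1:ℂ) * Bᴴ) * Xᴴ) a e
      = ∑ a : Fin D, ∑ e : Fin D, (X * B) a a * star ((X * B) e e) := by
        refine Finset.sum_congr rfl fun a _ => Finset.sum_congr rfl fun e _ => ?_
        rw [hY a e, hentry]
    _ = (X * B).trace * (starRingEnd ℂ) ((X * B).trace) := by
        rw [Matrix.trace, map_sum, Finset.sum_mul_sum]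
        simp only [Matrix.diag_apply, starRingEnd_apply]

-- Cauchy–Schwarz helper
lemma cs {ι : Type*} [Fintype ι] (F G : ι → ℝ) :
    ∑ i, F i * G i ≤ Real.sqrt (∑ i, F i ^ 2) * Real.sqrt (∑ i, G i ^ 2) := by
  have h := Finset.sum_mul_sq_le_sq_mul_sq Finset.univ F G
  calc ∑ i, F i * G i ≤ |∑ i, F i * G i| := le_abs_self _
    _ = Real.sqrt ((∑ i, F i * G i) ^ 2) := (Real.sqrt_sq_eq_abs _).symm
    _ ≤ Real.sqrt ((∑ i, F i ^ 2) * ∑ i, G i ^ 2) := Real.sqrt_le_sqrt h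
    _ = _ := Real.sqrt_mul (Finset.sum_nonneg fun i _ => sq_nonneg _) _

lemma rearrange (X : Matrix (Fin D) (Fin D) ℂ) (M : Fin D → Fin D → Matrix (Fin D) (Fin D) ℂ) :
    ∑ a : Fin D, ∑ e : Fin D, (X * M a e * Xᴴ) a e
      = ∑ a : Fin D, ∑ b : Fin D,
          X a b * (∑ e : Fin D, ∑ c : Fin D, (M a e) b c * star (X e c)) := by
  refine Finset.sum_congr rfl fun a _ => ?_
  calc ∑ e : Fin D, (X * M a e * Xᴴ) a e
      = ∑ e : Fin D, ∑ c : Fin D, ∑ b : Fin D, X a b * ((M a e) b c * star (X e c)) := by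
        refine Finset.sum_congr rfl fun e _ => ?_
        rw [Matrix.mul_apply]
        refine Finset.sum_congr rfl fun c _ => ?_
        rw [Matrix.conjTranspose_apply, Matrix.mul_apply, Finset.sum_mul]
        simp only [mul_assoc]
    _ = ∑ b : Fin D, ∑ e : Fin D, ∑ c : Fin D, X a b * ((M a e) b c * star (X e c)) :=
        (Finset.sum_congr rfl fun e _ => Finset.sum_comm).trans Finset.sum_comm
    _ = _ := by
        refine Finset.sum_congr rfl fun b _ => ?_
        rw [Finset.mul_sum]
        exact Finset.sum_congr rfl fun e _ => by rw [Finset.mul_sum]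

lemma Rbound (X : Matrix (Fin D) (Fin D) ℂ) (M : Fin D → Fin D → Matrix (Fin D) (Fin D) ℂ)
    (ε : ℝ) (hε : 0 ≤ ε) (hM : ∀ a e, ‖M a e‖ ≤ ε) :
    ‖∑ a : Fin D, ∑ e : Fin D, (X * M a e * Xᴴ) a e‖ ≤ D * ε * ‖X‖ ^ 2 := by
  rw [rearrange]
  set g : Fin D → Fin D → ℂ := fun a b => ∑ e : Fin D, ∑ c : Fin D, (M a e) b c * star (X e c)
    with hg
  set u : Fin D → Fin D → ℝ := fun a b => Real.sqrt (∑ e : Fin D, ∑ c : Fin D, ‖(M a e) b c‖ ^ 2)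
    with hu
  have hgb : ∀ a b, ‖g a b‖ ≤ u a b * ‖X‖ := by
    intro a b
    have h1 : ‖g a b‖ ≤ ∑ e : Fin D, ∑ c : Fin D, ‖(M a e) b c‖ * ‖X e c‖ := by
      refine (norm_sum_le _ _).trans (Finset.sum_le_sum fun e _ => ?_)
      refine (norm_sum_le _ _).trans (Finset.sum_le_sum fun c _ => ?_)
      rw [norm_mul, norm_star]
    have h2 : ∑ e : Fin D, ∑ c : Fin D, ‖(M a e) b c‖ * ‖X e c‖
        ≤ Real.sqrt (∑ e : Fin D, ∑ c : Fin D, ‖(M a e) b c‖ ^ 2) *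
          Real.sqrt (∑ e : Fin D, ∑ c : Fin D, ‖X e c‖ ^ 2) := by
      have := cs (ι := Fin D × Fin D) (fun p => ‖(M a p.1) b p.2‖) (fun p => ‖X p.1 p.2‖)
      simpa [Fintype.sum_prod_type] using this
    have h3 : Real.sqrt (∑ e : Fin D, ∑ c : Fin D, ‖X e c‖ ^ 2) = ‖X‖ := by
      rw [← normSqSum, Real.sqrt_sq (norm_nonneg _)]
    calc ‖g a b‖ ≤ _ := h1
      _ ≤ _ := h2
      _ = u a b * ‖X‖ := by rw [h3]
  have step1 : ‖∑ a : Fin D, ∑ b : Fin D, X a b * g a b‖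
      ≤ ∑ a : Fin D, ∑ b : Fin D, ‖X a b‖ * (u a b * ‖X‖) := by
    refine (norm_sum_le _ _).trans ?_
    refine (Finset.sum_le_sum fun a _ => norm_sum_le _ _).trans ?_
    refine Finset.sum_le_sum fun a _ => Finset.sum_le_sum fun b _ => ?_
    rw [norm_mul]
    exact mul_le_mul_of_nonneg_left (hgb a b) (norm_nonneg _)
  have step2 : ∑ a : Fin D, ∑ b : Fin D, ‖X a b‖ * (u a b * ‖X‖)
      = (∑ a : Fin D, ∑ b : Fin D, ‖X a b‖ * u a b) * ‖X‖ := by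
    rw [Finset.sum_mul]
    exact Finset.sum_congr rfl fun a _ => by rw [Finset.sum_mul]; exact Finset.sum_congr rfl fun b _ => by ring
  have step3 : ∑ a : Fin D, ∑ b : Fin D, ‖X a b‖ * u a b
      ≤ ‖X‖ * Real.sqrt (∑ a : Fin D, ∑ b : Fin D, u a b ^ 2) := by
    have hcs := cs (ι := Fin D × Fin D) (fun p => ‖X p.1 p.2‖) (fun p => u p.1 p.2)
    have h3 : Real.sqrt (∑ p : Fin D × Fin D, ‖X p.1 p.2‖ ^ 2) = ‖X‖ := by
      simp only [Fintype.sum_prod_type]; rw [← normSqSum, Real.sqrt_sq (norm_nonneg _)]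
    calc ∑ a : Fin D, ∑ b : Fin D, ‖X a b‖ * u a b
        = ∑ p : Fin D × Fin D, ‖X p.1 p.2‖ * u p.1 p.2 := by rw [Fintype.sum_prod_type]
      _ ≤ _ := hcs
      _ = ‖X‖ * Real.sqrt (∑ a : Fin D, ∑ b : Fin D, u a b ^ 2) := by
          rw [h3, Fintype.sum_prod_type]
  have step4 : ∑ a : Fin D, ∑ b : Fin D, u a b ^ 2 ≤ (D : ℝ) ^ 2 * ε ^ 2 := by
    have husq : ∀ a b, u a b ^ 2 = ∑ e : Fin D, ∑ c : Fin D, ‖(M a e) b c‖ ^ 2 := by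
      intro a b
      exact Real.sq_sqrt (Finset.sum_nonneg fun e _ =>
        Finset.sum_nonneg fun c _ => sq_nonneg _)
    calc ∑ a : Fin D, ∑ b : Fin D, u a b ^ 2
        = ∑ a : Fin D, ∑ e : Fin D, ‖M a e‖ ^ 2 := by
          refine Finset.sum_congr rfl fun a _ => ?_
          simp_rw [husq]
          rw [Finset.sum_comm]
          refine Finset.sum_congr rfl fun e _ => ?_
          rw [normSqSum]
      _ ≤ ∑ _a : Fin D, ∑ _e : Fin D, ε ^ 2 := by
          refine Finset.sum_le_sum fun a _ => Finset.sum_le_sum fun e _ => ?_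
          exact pow_le_pow_left₀ (norm_nonneg _) (hM a e) 2
      _ = (D : ℝ) ^ 2 * ε ^ 2 := by simp; ring
  have step5 : Real.sqrt (∑ a : Fin D, ∑ b : Fin D, u a b ^ 2) ≤ D * ε := by
    refine (Real.sqrt_le_sqrt step4).trans ?_
    rw [show (D : ℝ) ^ 2 * ε ^ 2 = (D * ε) ^ 2 by ring, Real.sqrt_sq (by positivity)]
  calc ‖∑ a : Fin D, ∑ b : Fin D, X a b * g a b‖
      ≤ (∑ a : Fin D, ∑ b : Fin D, ‖X a b‖ * u a b) * ‖X‖ := step1.trans_eq step2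
    _ ≤ ‖X‖ * Real.sqrt (∑ a : Fin D, ∑ b : Fin D, u a b ^ 2) * ‖X‖ := by
        refine mul_le_mul_of_nonneg_right step3 (norm_nonneg _)
    _ ≤ ‖X‖ * (D * ε) * ‖X‖ := by
        refine mul_le_mul_of_nonneg_right
          (mul_le_mul_of_nonneg_left step5 (norm_nonneg _)) (norm_nonneg _)
    _ = D * ε * ‖X‖ ^ 2 := by ring

lemma phi_norm (A : Fin d → Matrix (Fin D) (Fin D) ℂ) (m : ℕ) (X : Matrix (Fin D) (Fin D) ℂ) :
    ‖(fun Z => ∑ i, A i * Z * (A i)ᴴ)^[m] X‖ ≤ (∑ i, ‖A i‖ * ‖(A i)ᴴ‖) ^ m * ‖X‖ := by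
  set c : ℝ := ∑ i, ‖A i‖ * ‖(A i)ᴴ‖ with hc
  have hc0 : 0 ≤ c := Finset.sum_nonneg fun i _ => mul_nonneg (norm_nonneg _) (norm_nonneg _)
  induction m with
  | zero => simp
  | succ m ih =>
      rw [Function.iterate_succ_apply']
      set Y := (fun Z => ∑ i, A i * Z * (A i)ᴴ)^[m] X with hY
      calc ‖∑ i, A i * Y * (A i)ᴴ‖ ≤ ∑ i, ‖A i * Y * (A i)ᴴ‖ := norm_sum_le _ _
        _ ≤ ∑ i, ‖A i‖ * ‖(A i)ᴴ‖ * ‖Y‖ := by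
            refine Finset.sum_le_sum fun i _ => ?_
            calc ‖A i * Y * (A i)ᴴ‖ ≤ ‖A i * Y‖ * ‖(A i)ᴴ‖ := norm_mul_le _ _
              _ ≤ ‖A i‖ * ‖Y‖ * ‖(A i)ᴴ‖ :=
                  mul_le_mul_of_nonneg_right (norm_mul_le _ _) (norm_nonneg _)
              _ = ‖A i‖ * ‖(A i)ᴴ‖ * ‖Y‖ := by ring
        _ = c * ‖Y‖ := by rw [← Finset.sum_mul]
        _ ≤ c * (c ^ m * ‖X‖) := mul_le_mul_of_nonneg_left ih hc0
        _ = c ^ (m + 1) * ‖X‖ := by ring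

lemma tt_bound (A : Fin d → Matrix (Fin D) (Fin D) ℂ) (n : ℕ) (hD : 0 < D)
    (X : Matrix (Fin D) (Fin D) ℂ) :
    ‖(fun Z => ∑ i, A i * Z * (A i)ᴴ)^[n] X - (X.trace / (D : ℂ)) • 1‖
      ≤ ((∑ i, ‖A i‖ * ‖(A i)ᴴ‖) ^ n + ‖(1 : Matrix (Fin D) (Fin D) ℂ)‖) * ‖X‖ := by
  have htr : ‖X.trace‖ ≤ D * ‖X‖ := by
    rw [Matrix.trace]
    calc ‖∑ i, X.diag i‖ ≤ ∑ i : Fin D, ‖X.diag i‖ := norm_sum_le _ _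
      _ ≤ ∑ _i : Fin D, ‖X‖ := Finset.sum_le_sum fun i _ => entry_le X i i
      _ = D * ‖X‖ := by simp [mul_comm]
  have hsm : ‖(X.trace / (D : ℂ)) • (1 : Matrix (Fin D) (Fin D) ℂ)‖
      ≤ ‖X‖ * ‖(1 : Matrix (Fin D) (Fin D) ℂ)‖ := by
    rw [norm_smul]
    have hq : ‖X.trace / (D : ℂ)‖ ≤ ‖X‖ := by
      rw [norm_div]
      have hDn : ‖((D : ℂ))‖ = (D : ℝ) := by simp
      rw [hDn, div_le_iff₀ (by exact_mod_cast hD)]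
      calc ‖X.trace‖ ≤ D * ‖X‖ := htr
        _ = ‖X‖ * D := by ring
    exact mul_le_mul_of_nonneg_right hq (norm_nonneg _)
  calc ‖_ - _‖ ≤ ‖(fun Z => ∑ i, A i * Z * (A i)ᴴ)^[n] X‖
        + ‖(X.trace / (D : ℂ)) • (1 : Matrix (Fin D) (Fin D) ℂ)‖ := norm_sub_le _ _
    _ ≤ (∑ i, ‖A i‖ * ‖(A i)ᴴ‖) ^ n * ‖X‖ + ‖X‖ * ‖(1 : Matrix (Fin D) (Fin D) ℂ)‖ :=
        add_le_add (phi_norm A n X) hsm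
    _ = _ := by ring

lemma trace_mul_conjTranspose (Z : Matrix (Fin D) (Fin D) ℂ) :
    (Z * Zᴴ).trace = ((‖Z‖ ^ 2 : ℝ) : ℂ) := by
  rw [Matrix.trace]
  have : ∀ a : Fin D, (Z * Zᴴ).diag a = ((∑ b, ‖Z a b‖ ^ 2 : ℝ) : ℂ) := by
    intro a
    rw [Matrix.diag_apply, Matrix.mul_apply]
    rw [Complex.ofReal_sum]
    refine Finset.sum_congr rfl fun b _ => ?_
    rw [Matrix.conjTranspose_apply, Complex.star_def, Complex.mul_conj]
    simp [Complex.normSq_eq_norm_sq]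
  simp_rw [this]
  rw [← Complex.ofReal_sum, normSqSum]

lemma kernel_lemma (n : ℕ) (hD : 0 < D)
    (A : Fin d → Matrix (Fin D) (Fin D) ℂ)
    (hgap : opNormF (fun Y =>
        (fun Z => ∑ i, A i * Z * (A i)ᴴ)^[n] Y -
          (Y.trace / (D : ℂ)) • (1 : Matrix (Fin D) (Fin D) ℂ)) <
      1 / (D : ℝ) ^ 2)
    (Z : Matrix (Fin D) (Fin D) ℂ)
    (hZ : ∀ i : Fin n → Fin d, (Z * (List.ofFn fun t => A (i t)).prod).trace = 0) :
    Z = 0 := by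
  by_contra hZ0
  set TT : Matrix (Fin D) (Fin D) ℂ → Matrix (Fin D) (Fin D) ℂ := fun Y =>
    (fun Z => ∑ i, A i * Z * (A i)ᴴ)^[n] Y -
      (Y.trace / (D : ℂ)) • (1 : Matrix (Fin D) (Fin D) ℂ) with hTTdef
  have hε : opNormF TT < 1 / (D : ℝ) ^ 2 := hgap
  set ε := opNormF TT with hεdef
  -- boundedness of the defining set of `opNormF TT`
  have hBdd : BddAbove {r : ℝ | ∃ X : Matrix (Fin D) (Fin D) ℂ,
      frobNorm X = 1 ∧ r = frobNorm (TT X)} := by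
    refine ⟨(∑ i, ‖A i‖ * ‖(A i)ᴴ‖) ^ n + ‖(1 : Matrix (Fin D) (Fin D) ℂ)‖, ?_⟩
    rintro r ⟨X, hX1, rfl⟩
    rw [frobNorm_eq] at hX1 ⊢
    calc ‖TT X‖ ≤ ((∑ i, ‖A i‖ * ‖(A i)ᴴ‖) ^ n + ‖(1 : Matrix (Fin D) (Fin D) ℂ)‖) * ‖X‖ :=
          tt_bound A n hD X
      _ = _ := by rw [hX1, mul_one]
  have hmem : ∀ Y : Matrix (Fin D) (Fin D) ℂ, frobNorm Y = 1 → ‖TT Y‖ ≤ ε := by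
    intro Y hY
    rw [← frobNorm_eq]
    exact le_csSup hBdd ⟨Y, hY, rfl⟩
  have hε0 : 0 ≤ ε := by
    have h1 : frobNorm (single (⟨0, hD⟩ : Fin D) ⟨0, hD⟩ (1:ℂ)) = 1 := by
      rw [frobNorm_eq, norm_stdBasis]
    have h2 := le_csSup hBdd ⟨_, h1, rfl⟩
    have h3 : (0:ℝ) ≤ frobNorm (TT (single (⟨0, hD⟩ : Fin D) ⟨0, hD⟩ (1:ℂ))) := by
      rw [frobNorm_eq]; exact norm_nonneg _
    exact h3.trans h2
  have hE : ∀ a e : Fin D, ‖TT (single a e (1:ℂ))‖ ≤ ε := fun a e =>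
    hmem _ (by rw [frobNorm_eq, norm_stdBasis])
  -- the two evaluations of the double sum
  have h1 : ∑ a : Fin D, ∑ e : Fin D,
        (Z * ((fun Z => ∑ i, A i * Z * (A i)ᴴ)^[n] (single a e (1:ℂ))) * Zᴴ) a e
      = ∑ i : Fin n → Fin d,
          (Z * (List.ofFn fun t => A (i t)).prod).trace *
            (starRingEnd ℂ) ((Z * (List.ofFn fun t => A (i t)).prod).trace) := by
    calc ∑ a : Fin D, ∑ e : Fin D,
          (Z * ((fun Z => ∑ i, A i * Z * (A i)ᴴ)^[n] (single a e (1:ℂ))) * Zᴴ) a e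
        = ∑ a : Fin D, ∑ e : Fin D, ∑ i : Fin n → Fin d,
            (Z * ((List.ofFn fun t => A (i t)).prod * single a e (1:ℂ) *
              ((List.ofFn fun t => A (i t)).prod)ᴴ) * Zᴴ) a e := by
          refine Finset.sum_congr rfl fun a _ => Finset.sum_congr rfl fun e _ => ?_
          rw [iterate_phi]
          rw [Finset.mul_sum, Finset.sum_mul, Matrix.sum_apply]
      _ = ∑ i : Fin n → Fin d, ∑ a : Fin D, ∑ e : Fin D,
            (Z * ((List.ofFn fun t => A (i t)).prod * single a e (1:ℂ) *
              ((List.ofFn fun t => A (i t)).prod)ᴴ) * Zᴴ) a e :=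
          (Finset.sum_congr rfl fun a _ => Finset.sum_comm).trans Finset.sum_comm
      _ = _ := Finset.sum_congr rfl fun i _ => keyB Z _
  have h2 : ∑ a : Fin D, ∑ e : Fin D,
        (Z * ((fun Z => ∑ i, A i * Z * (A i)ᴴ)^[n] (single a e (1:ℂ))) * Zᴴ) a e
      = (∑ a : Fin D, ∑ e : Fin D, (Z * TT (single a e (1:ℂ)) * Zᴴ) a e)
        + (Z * Zᴴ).trace / (D : ℂ) := by
    have hsplit : ∀ a e : Fin D,
        (fun Z => ∑ i, A i * Z * (A i)ᴴ)^[n] (single a e (1:ℂ))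
          = TT (single a e (1:ℂ)) +
            ((single a e (1:ℂ)).trace / (D : ℂ)) • 1 := by
      intro a e
      rw [hTTdef]
      exact (sub_add_cancel _ _).symm
    calc ∑ a : Fin D, ∑ e : Fin D,
          (Z * ((fun Z => ∑ i, A i * Z * (A i)ᴴ)^[n] (single a e (1:ℂ))) * Zᴴ) a e
        = ∑ a : Fin D, ∑ e : Fin D,
            ((Z * TT (single a e (1:ℂ)) * Zᴴ) a e
              + ((single a e (1:ℂ)).trace / (D : ℂ)) * ((Z * Zᴴ) a e)) := by
          refine Finset.sum_congr rfl fun a _ => Finset.sum_congr rfl fun e _ => ?_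
          rw [hsplit a e, Matrix.mul_add, Matrix.add_mul, Matrix.add_apply]
          congr 1
          rw [Matrix.mul_smul, Matrix.mul_one, Matrix.smul_mul, Matrix.smul_apply,
            smul_eq_mul]
      _ = (∑ a : Fin D, ∑ e : Fin D, (Z * TT (single a e (1:ℂ)) * Zᴴ) a e)
          + ∑ a : Fin D, ∑ e : Fin D,
              ((single a e (1:ℂ)).trace / (D : ℂ)) * ((Z * Zᴴ) a e) := by
          rw [← Finset.sum_add_distrib]
          exact Finset.sum_congr rfl fun a _ => Finset.sum_add_distrib
      _ = (∑ a : Fin D, ∑ e : Fin D, (Z * TT (single a e (1:ℂ)) * Zᴴ) a e)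
          + (Z * Zᴴ).trace / (D : ℂ) := by
          congr 1
          have : ∀ a : Fin D, ∑ e : Fin D,
              ((single a e (1:ℂ)).trace / (D : ℂ)) * ((Z * Zᴴ) a e)
                = (Z * Zᴴ) a a / (D : ℂ) := by
            intro a
            rw [Finset.sum_eq_single a]
            · rw [trace_stdBasis, if_pos rfl]
              ring
            · intro e _ he
              rw [trace_stdBasis, if_neg (fun h => he h.symm), zero_div, zero_mul]
            · intro h; exact absurd (Finset.mem_univ a) h
          simp_rw [this]
          rw [Matrix.trace, Finset.sum_div]
          exact Finset.sum_congr rfl fun a _ => by rw [Matrix.diag_apply]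
  -- combine
  have hzero : (0 : ℂ) = (∑ a : Fin D, ∑ e : Fin D,
      (Z * TT (single a e (1:ℂ)) * Zᴴ) a e) + (Z * Zᴴ).trace / (D : ℂ) := by
    rw [← h2, h1]
    symm
    refine Finset.sum_eq_zero fun i _ => ?_
    rw [hZ i, zero_mul]
  have hR : (∑ a : Fin D, ∑ e : Fin D, (Z * TT (single a e (1:ℂ)) * Zᴴ) a e)
      = -((Z * Zᴴ).trace / (D : ℂ)) := by linear_combination -hzero
  have hRn : ‖∑ a : Fin D, ∑ e : Fin D, (Z * TT (single a e (1:ℂ)) * Zᴴ) a e‖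
      = ‖Z‖ ^ 2 / (D : ℝ) := by
    rw [hR, norm_neg, norm_div, trace_mul_conjTranspose]
    have h1 : ‖((‖Z‖ ^ 2 : ℝ) : ℂ)‖ = ‖Z‖ ^ 2 := by
      rw [Complex.norm_real, Real.norm_of_nonneg (sq_nonneg _)]
    have h2 : ‖((D : ℕ) : ℂ)‖ = (D : ℝ) := by simp
    rw [h1, h2]
  have hRb := Rbound Z (fun a e => TT (single a e (1:ℂ))) ε hε0 hE
  rw [hRn] at hRb
  have hZpos : 0 < ‖Z‖ := by
    rw [norm_pos_iff]
    exact hZ0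
  have hDpos : (0:ℝ) < D := by exact_mod_cast hD
  have hfinal : (D : ℝ) * ε * ‖Z‖ ^ 2 < (D : ℝ) * (1 / (D : ℝ) ^ 2) * ‖Z‖ ^ 2 := by
    have := mul_lt_mul_of_pos_left hε hDpos
    exact mul_lt_mul_of_pos_right this (by positivity)
  have heq : (D : ℝ) * (1 / (D : ℝ) ^ 2) * ‖Z‖ ^ 2 = ‖Z‖ ^ 2 / (D : ℝ) := by
    field_simp
  rw [heq] at hfinal
  linarith

end MPSAux

/-- if `‖Φ^n − Φ^∞‖_op < 1/D²`, where `Φ(X) = ∑ i, A i X (A i)ᴴ` and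
`Φ^∞(X) = tr(X) 𝟙 / D`, then `Γ_n` is injective. -/
theorem injectivity_from_expander_gap
    (d D n : ℕ) (hd : 0 < d) (hD : 0 < D) (hn : 0 < n)
    (A : Fin d → Matrix (Fin D) (Fin D) ℂ)
    (hgap : opNormF (fun Y =>
        (fun Z => ∑ i, A i * Z * (A i)ᴴ)^[n] Y -
          (Y.trace / (D : ℂ)) • (1 : Matrix (Fin D) (Fin D) ℂ)) <
      1 / (D : ℝ) ^ 2) :
    Function.Injective (Gamma d D n A) := by
  intro X Y hXY
  have h : ∀ i : Fin n → Fin d, ((X - Y) * (List.ofFn fun t => A (i t)).prod).trace = 0 := by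
    intro i
    have hi : Gamma d D n A X i = Gamma d D n A Y i := congrFun hXY i
    simp only [Gamma] at hi
    rw [Matrix.sub_mul, Matrix.trace_sub, hi, sub_self]
  exact sub_eq_zero.mp (MPSAux.kernel_lemma n hD A hgap (X - Y) h)
end

section
/- Let D be a positive integer. Let U₁ be a D×D diagonal unitary matrix such that for every positive integer k the diagonal entries of U₁^k are pairwise distinct, and let U₂ be a D×D unitary matrix all of whose entries are nonzero. Define the linear map E(X) = ½(U₁ X U₁† + U₂ X U₂†) on D×D complex matrices. If E(Y) = αY for some nonzero D×D matrix Y and some α ∈ ℂ with |α| = 1, then α = 1 and Y is a scalar multiple of the identity matrix; in other words, the channel E is primitive. -/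
open Matrix

-- helper 1: trace(MᴴM)=0 → M=0
lemma aux_trace_zero {n : ℕ} (M : Matrix (Fin n) (Fin n) ℂ)
    (h : Matrix.trace (Mᴴ * M) = 0) : M = 0 := by
  have key : Matrix.trace (Mᴴ * M) = ((∑ j, ∑ i, Complex.normSq (M i j) : ℝ) : ℂ) := by
    rw [Matrix.trace]
    push_cast
    refine Finset.sum_congr rfl fun j _ => ?_
    rw [Matrix.diag_apply, Matrix.mul_apply]
    refine Finset.sum_congr rfl fun i _ => ?_
    rw [Matrix.conjTranspose_apply, Complex.normSq_eq_conj_mul_self]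
    rfl
  rw [key] at h
  have h0 : ∑ j, ∑ i, Complex.normSq (M i j) = 0 := by exact_mod_cast h
  ext i j
  have h1 := (Finset.sum_eq_zero_iff_of_nonneg (fun j _ =>
      Finset.sum_nonneg fun i _ => Complex.normSq_nonneg (M i j))).mp h0 j (Finset.mem_univ j)
  have h2 := (Finset.sum_eq_zero_iff_of_nonneg (fun i _ =>
      Complex.normSq_nonneg (M i j))).mp h1 i (Finset.mem_univ i)
  simpa using Complex.normSq_eq_zero.mp h2

-- helper 2: trace invariance under unitary conjugation
lemma aux_tr_conj {n : ℕ} (U Y : Matrix (Fin n) (Fin n) ℂ) (hU : Uᴴ * U = 1) :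
    Matrix.trace ((U * Y * Uᴴ)ᴴ * (U * Y * Uᴴ)) = Matrix.trace (Yᴴ * Y) := by
  have hU' : U * Uᴴ = 1 := mul_eq_one_comm.mp hU
  have h1 : (U * Y * Uᴴ)ᴴ * (U * Y * Uᴴ) = U * (Yᴴ * Y) * Uᴴ := by
    simp only [conjTranspose_mul, conjTranspose_conjTranspose, Matrix.mul_assoc]
    rw [← Matrix.mul_assoc Uᴴ U, hU, Matrix.one_mul]
  rw [h1, Matrix.trace_mul_cycle, ← Matrix.mul_assoc, hU, Matrix.one_mul]

lemma aux_eq {n : ℕ} (A B Y : Matrix (Fin n) (Fin n) ℂ) (α : ℂ)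
    (hαα : (starRingEnd ℂ) α * α = 1)
    (trA : Matrix.trace (Aᴴ * A) = Matrix.trace (Yᴴ * Y))
    (trB : Matrix.trace (Bᴴ * B) = Matrix.trace (Yᴴ * Y))
    (hAB : A + B = (2 * α) • Y) : A = B := by
  have e1 : Matrix.trace ((A + B)ᴴ * (A + B)) = 4 * Matrix.trace (Yᴴ * Y) := by
    rw [hAB, conjTranspose_smul, smul_mul_assoc, mul_smul_comm, smul_smul, trace_smul]
    have : star (2 * α) * (2 * α) = 4 := by
      simp only [star_mul', star_ofNat]
      calc (2 : ℂ) * star α * (2 * α) = 4 * (star α * α) := by ring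
        _ = 4 := by rw [show (star α : ℂ) = (starRingEnd ℂ) α from rfl, hαα, mul_one]
    rw [this]
    simp
  have e2 : Matrix.trace ((A + B)ᴴ * (A + B)) =
      Matrix.trace (Aᴴ * A) + Matrix.trace (Aᴴ * B) + Matrix.trace (Bᴴ * A)
        + Matrix.trace (Bᴴ * B) := by
    simp [conjTranspose_add, Matrix.add_mul, Matrix.mul_add, Matrix.trace_add]
    ring
  have e3 : Matrix.trace ((A - B)ᴴ * (A - B)) =
      Matrix.trace (Aᴴ * A) - Matrix.trace (Aᴴ * B) - Matrix.trace (Bᴴ * A)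
        + Matrix.trace (Bᴴ * B) := by
    simp [conjTranspose_sub, Matrix.sub_mul, Matrix.mul_sub, Matrix.trace_sub]
    ring
  have h0 : Matrix.trace ((A - B)ᴴ * (A - B)) = 0 := by
    rw [e3]
    rw [e1] at e2
    rw [trA, trB] at e2 ⊢
    linear_combination e2
  have := aux_trace_zero (A - B) h0
  exact sub_eq_zero.mp this

/-- the channel `E(X) = ½(U₁ X U₁ᴴ + U₂ X U₂ᴴ)`, where `U₁` is a diagonal
unitary all of whose powers have pairwise distinct diagonal entries and `U₂` is a unitary
with all entries nonzero, is primitive: any eigenvector with eigenvalue of modulus one has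
eigenvalue `1` and is a scalar multiple of the identity. -/
theorem channel_is_primitive
    (D : ℕ) (hD : 0 < D) (u : Fin D → ℂ)
    (hU1 : (Matrix.diagonal u)ᴴ * Matrix.diagonal u = 1)
    (hdist : ∀ k : ℕ, 0 < k → Function.Injective (fun i => u i ^ k))
    (U2 : Matrix (Fin D) (Fin D) ℂ)
    (hU2 : U2ᴴ * U2 = 1) (hU2e : ∀ i j, U2 i j ≠ 0)
    (Y : Matrix (Fin D) (Fin D) ℂ) (hY : Y ≠ 0)
    (α : ℂ) (hα : ‖α‖ = 1)
    (hE : (1 / 2 : ℂ) •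
        (Matrix.diagonal u * Y * (Matrix.diagonal u)ᴴ + U2 * Y * U2ᴴ) = α • Y) :
    α = 1 ∧ ∃ c : ℂ, Y = c • (1 : Matrix (Fin D) (Fin D) ℂ) := by
  set P := Matrix.diagonal u with hP
  -- |u i| facts
  have hu : ∀ i, (starRingEnd ℂ) (u i) * u i = 1 := by
    intro i
    have h := congrArg (fun M => M i i) hU1
    simpa [hP, Matrix.mul_apply, Matrix.diagonal_apply, Matrix.conjTranspose_apply,
      Matrix.one_apply_eq, Finset.sum_ite_eq] using h
  have huz : ∀ i, u i ≠ 0 := by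
    intro i h
    have := hu i
    rw [h] at this
    simp at this
  have hα0 : α ≠ 0 := by
    intro h; rw [h] at hα; simp at hα
  have hαα : (starRingEnd ℂ) α * α = 1 := by
    have h1 : Complex.normSq α = 1 := by
      rw [← Complex.sq_norm, hα]; norm_num
    rw [← Complex.normSq_eq_conj_mul_self, h1, Complex.ofReal_one]
  -- equality step: both conjugations equal α • Y
  have hAB : P * Y * Pᴴ + U2 * Y * U2ᴴ = (2 * α) • Y := by
    have h2 : P * Y * Pᴴ + U2 * Y * U2ᴴ
        = (2 : ℂ) • ((1 / 2 : ℂ) • (P * Y * Pᴴ + U2 * Y * U2ᴴ)) := by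
      rw [smul_smul]; norm_num
    rw [h2, hE, smul_smul, mul_comm]
  have hA : P * Y * Pᴴ = U2 * Y * U2ᴴ :=
    aux_eq _ _ Y α hαα (aux_tr_conj P Y hU1) (aux_tr_conj U2 Y hU2) hAB
  have hAα : P * Y * Pᴴ = α • Y := by
    have h2 : (2 : ℂ) • (P * Y * Pᴴ) = (2 * α) • Y := by
      rw [two_smul]; nth_rw 2 [hA]; exact hAB
    have h3 := congrArg (fun M => (1 / 2 : ℂ) • M) h2
    simpa [smul_smul, mul_comm, mul_assoc] using h3
  have hBα : U2 * Y * U2ᴴ = α • Y := hA ▸ hAα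
  -- unwind the conjugations
  have hPY : P * Y = α • (Y * P) := by
    have h := congrArg (fun M => M * P) hAα
    simpa [Matrix.mul_assoc, hU1, Matrix.smul_mul] using h
  have hU2Y : U2 * Y = α • (Y * U2) := by
    have h := congrArg (fun M => M * U2) hBα
    simpa [Matrix.mul_assoc, hU2, Matrix.smul_mul] using h
  have hentry : ∀ i j, u i * Y i j = α * (Y i j * u j) := by
    intro i j
    have h := congrArg (fun M => M i j) hPY
    simpa [hP, Matrix.diagonal_mul, Matrix.mul_diagonal, Matrix.smul_apply] using h
  have hne : ∀ i j, Y i j ≠ 0 → u i = α * u j := by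
    intro i j h
    apply mul_right_cancel₀ h
    linear_combination hentry i j
  have uinj : Function.Injective u := by
    intro a b h
    exact hdist 1 one_pos (show u a ^ 1 = u b ^ 1 by simp [h])
  have rowuniq : ∀ i k k', Y i k ≠ 0 → Y i k' ≠ 0 → k = k' := by
    intro i k k' hk hk'
    have h1 := hne i k hk
    have h2 := hne i k' hk'
    exact uinj (mul_left_cancel₀ hα0 (h1 ▸ h2))
  have hentry2 : ∀ i j, (∑ t, U2 i t * Y t j) = α * ∑ t, Y i t * U2 t j := by
    intro i j
    have h := congrArg (fun M => M i j) hU2Y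
    simpa [Matrix.mul_apply, Matrix.smul_apply] using h
  -- every column of Y is nonzero
  have colnz : ∀ j, ∃ i, Y i j ≠ 0 := by
    by_contra h
    push_neg at h
    obtain ⟨j₀, hj₀⟩ := h
    apply hY
    ext i k
    simp only [Matrix.zero_apply]
    by_contra hik
    have hs := hentry2 i j₀
    have hlhs : (∑ t, U2 i t * Y t j₀) = 0 :=
      Finset.sum_eq_zero fun t _ => by rw [hj₀ t, mul_zero]
    rw [hlhs] at hs
    have hsum : (∑ t, Y i t * U2 t j₀) = 0 := by
      rcases mul_eq_zero.mp hs.symm with h | h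
      · exact absurd h hα0
      · exact h
    have hone : (∑ t, Y i t * U2 t j₀) = Y i k * U2 k j₀ := by
      refine Finset.sum_eq_single k (fun b _ hb => ?_) (fun hk => absurd (Finset.mem_univ k) hk)
      by_cases hb0 : Y i b = 0
      · rw [hb0, zero_mul]
      · exact absurd (rowuniq i b k hb0 hik) hb
    rw [hone] at hsum
    rcases mul_eq_zero.mp hsum with h | h
    · exact hik h
    · exact hU2e k j₀ h
  -- the permutation σ
  set σ : Fin D → Fin D := fun j => (colnz j).choose with hσdef
  have hσ : ∀ j, Y (σ j) j ≠ 0 := fun j => (colnz j).choose_spec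
  have huσ : ∀ j, u (σ j) = α * u j := fun j => hne _ _ (hσ j)
  have hiter : ∀ (k : ℕ) (j : Fin D), u (σ^[k] j) = α ^ k * u j := by
    intro k
    induction k with
    | zero => intro j; simp
    | succ n ih =>
      intro j
      rw [Function.iterate_succ_apply', huσ, ih, pow_succ]
      ring
  -- find m > 0 with α ^ m = 1
  have j₀ : Fin D := ⟨0, hD⟩
  obtain ⟨a, b, hab, heq⟩ :=
    Finite.exists_ne_map_eq_of_infinite (fun k : ℕ => σ^[k] j₀)
  have key : ∀ a b : ℕ, a < b → σ^[a] j₀ = σ^[b] j₀ → α ^ (b - a) = 1 := by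
    intro a b hlt he
    have h1 : α ^ a * u j₀ = α ^ b * u j₀ := by
      rw [← hiter, ← hiter, he]
    have h2 : α ^ a = α ^ b := mul_right_cancel₀ (huz j₀) h1
    have h3 : α ^ b = α ^ a * α ^ (b - a) := by
      rw [← pow_add, Nat.add_sub_cancel' hlt.le]
    rw [h3] at h2
    nth_rw 1 [← mul_one (α ^ a)] at h2
    exact (mul_left_cancel₀ (pow_ne_zero a hα0) h2).symm
  obtain ⟨m, hm, hm1⟩ : ∃ m : ℕ, 0 < m ∧ α ^ m = 1 := by
    rcases lt_or_gt_of_ne hab with h | h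
    · exact ⟨b - a, Nat.sub_pos_of_lt h, key a b h heq⟩
    · exact ⟨a - b, Nat.sub_pos_of_lt h, key b a h heq.symm⟩
  -- σ = id, α = 1
  have hσid : ∀ j, σ j = j := by
    intro j
    apply hdist m hm
    show u (σ j) ^ m = u j ^ m
    rw [huσ j, mul_pow, hm1, one_mul]
  have hα1 : α = 1 := by
    have h := huσ j₀
    rw [hσid j₀] at h
    nth_rw 1 [← one_mul (u j₀)] at h
    exact (mul_right_cancel₀ (huz j₀) h).symm
  -- Y diagonal
  have hdiag : ∀ i j, i ≠ j → Y i j = 0 := by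
    intro i j hij
    by_contra h
    have := hne i j h
    rw [hα1, one_mul] at this
    exact hij (uinj this)
  -- diagonal entries equal
  have hc : ∀ i j, Y j j = Y i i := by
    intro i j
    have hs := hentry2 i j
    rw [hα1, one_mul] at hs
    have hl : (∑ t, U2 i t * Y t j) = U2 i j * Y j j := by
      refine Finset.sum_eq_single j (fun b _ hb => ?_) (fun hk => absurd (Finset.mem_univ j) hk)
      rw [hdiag b j hb, mul_zero]
    have hr : (∑ t, Y i t * U2 t j) = Y i i * U2 i j := by
      refine Finset.sum_eq_single i (fun b _ hb => ?_) (fun hk => absurd (Finset.mem_univ i) hk)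
      rw [hdiag i b (fun he => hb he.symm), zero_mul]
    rw [hl, hr] at hs
    apply mul_left_cancel₀ (hU2e i j)
    rw [hs]; ring
  refine ⟨hα1, Y j₀ j₀, ?_⟩
  ext i j
  by_cases hij : i = j
  · subst hij
    simp [Matrix.smul_apply, Matrix.one_apply_eq, hc i j₀]
  · simp [Matrix.smul_apply, Matrix.one_apply_ne hij, hdiag i j hij]
end
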